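/- arXiv:2506.05697 — 5 statements merged into one kernel-verified Lean document; each statement's English description precedes it below -/
import Mathlib

section
/- Let I_{m-1} be the ideal of Q[C_{-1},...,C_{-(m+1)}] generated by E_1,...,E_{m-1}, where E_k = (C^3)_{-k}. There exist unique homogeneous polynomials R_k ∈ Q[C_{-1},C_{-2}] of weight k+3 (with weights w(C_{-1})=2, w(C_{-2})=3) such that the polynomials Ẽ_k = C_{-(k+2)} + R_k(C_{-1},C_{-2}), k = 1,...,m-1, generate the same ideal I_{m-1}. -/
open MvPolynomial Finset PowerSeries

/-- The generic Laurent series `C = x + ∑_{i≥1} C₋ᵢ x⁻ⁱ` with indeterminate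
coefficients `C₋ᵢ = X i`, modelled in the variable `u = x⁻¹`. -/
noncomputable def genC : LaurentSeries (MvPolynomial ℕ ℚ) :=
  HahnSeries.single (-1 : ℤ) 1 +
    HahnSeries.ofPowerSeries ℤ (MvPolynomial ℕ ℚ)
      (PowerSeries.mk fun i => if i = 0 then 0 else MvPolynomial.X i)

namespace Stmt6Aux

abbrev A := MvPolynomial ℕ ℚ

/-- The recursively defined coefficients of the universal solution. -/
noncomputable def rr : ℕ → A
  | 0 => 0
  | 1 => MvPolynomial.X 1
  | 2 => MvPolynomial.X 2
  | (n+3) =>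
    MvPolynomial.C (-1/3 : ℚ) *
      ((3 : A) * ∑ j ∈ (Finset.range (n+3)).attach, rr j.1 * rr (n+2 - j.1)
        + ∑ j ∈ (Finset.range (n+2)).attach, ∑ l ∈ (Finset.range (n+2 - j.1)).attach,
            rr j.1 * rr l.1 * rr (n+1 - j.1 - l.1))
  decreasing_by
  · exact Finset.mem_range.mp j.2
  · omega
  · exact lt_of_lt_of_le (Finset.mem_range.mp j.2) (by omega)
  · exact lt_of_lt_of_le (Finset.mem_range.mp l.2) (by omega)
  · omega

lemma rr_zero : rr 0 = 0 := by rw [rr]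
lemma rr_one : rr 1 = MvPolynomial.X 1 := by rw [rr]
lemma rr_two : rr 2 = MvPolynomial.X 2 := by rw [rr]

lemma rr_eq (n : ℕ) : rr (n+3) = MvPolynomial.C (-1/3 : ℚ) *
      ((3 : A) * ∑ j ∈ Finset.range (n+3), rr j * rr (n+2 - j)
        + ∑ j ∈ Finset.range (n+2), ∑ l ∈ Finset.range (n+2 - j),
            rr j * rr l * rr (n+1 - j - l)) := by
  rw [rr]
  congr 1
  congr 1
  · congr 1
    exact Finset.sum_attach (Finset.range (n+3)) (fun j => rr j * rr (n+2-j))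
  · rw [Finset.sum_attach (Finset.range (n+2)) (fun j => ∑ l ∈ (Finset.range (n+2-j)).attach,
      rr j * rr l.1 * rr (n+1 - j - l.1))]
    exact Finset.sum_congr rfl fun j hj =>
      Finset.sum_attach (Finset.range (n+2-j)) (fun l => rr j * rr l * rr (n+1 - j - l))

noncomputable def G : PowerSeries A := PowerSeries.mk rr

noncomputable def PP : PowerSeries A := PowerSeries.mk fun i => if i = 0 then 0 else MvPolynomial.X i

lemma coeff_mul_range (φ ψ : PowerSeries A) (n : ℕ) :
    PowerSeries.coeff n (φ * ψ) = ∑ j ∈ range (n+1), PowerSeries.coeff j φ * PowerSeries.coeff (n-j) ψ := by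
  rw [PowerSeries.coeff_mul, Finset.Nat.sum_antidiagonal_eq_sum_range_succ_mk]

lemma coeff_sq (φ : PowerSeries A) (n : ℕ) :
    PowerSeries.coeff n (φ^2) = ∑ j ∈ range (n+1), PowerSeries.coeff j φ * PowerSeries.coeff (n-j) φ := by
  rw [pow_two, coeff_mul_range]

lemma coeff_cube (φ : PowerSeries A) (n : ℕ) :
    PowerSeries.coeff n (φ^3) = ∑ j ∈ range (n+1), ∑ l ∈ range (n+1-j),
      PowerSeries.coeff j φ * PowerSeries.coeff l φ * PowerSeries.coeff (n-j-l) φ := by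
  rw [pow_succ, pow_two, mul_assoc, coeff_mul_range]
  refine Finset.sum_congr rfl fun j hj => ?_
  rw [coeff_mul_range, Finset.mul_sum]
  rw [Finset.mem_range] at hj
  rw [show n - j + 1 = n + 1 - j by omega]
  exact Finset.sum_congr rfl fun l hl => by ring

lemma rr_key (n : ℕ) :
    3 * rr (n+3) + 3 * PowerSeries.coeff (n+2) (G^2) + PowerSeries.coeff (n+1) (G^3) = 0 := by
  have h2 : PowerSeries.coeff (n+2) (G^2) = ∑ j ∈ range (n+3), rr j * rr (n+2 - j) := by
    rw [coeff_sq]; simp [G]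
  have h3 : PowerSeries.coeff (n+1) (G^3) = ∑ j ∈ range (n+2), ∑ l ∈ range (n+2 - j),
      rr j * rr l * rr (n+1 - j - l) := by
    rw [coeff_cube]
    refine Finset.sum_congr rfl fun j hj => ?_
    rw [Finset.mem_range] at hj
    rw [show n + 1 + 1 - j = n + 2 - j by omega]
    exact Finset.sum_congr rfl fun l hl => by simp [G]
  rw [h2, h3, rr_eq]
  set S2 := ∑ j ∈ range (n+3), rr j * rr (n+2 - j)
  set S3 := ∑ j ∈ range (n+2), ∑ l ∈ range (n+2 - j), rr j * rr l * rr (n+1 - j - l)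
  have hc : (3 : A) * MvPolynomial.C (-1/3 : ℚ) = -1 := by
    have h : (3 : A) = MvPolynomial.C (3 : ℚ) := (map_ofNat (MvPolynomial.C : ℚ →+* A) 3).symm
    rw [h, ← MvPolynomial.C_mul]; norm_num
  calc 3 * (MvPolynomial.C (-1/3 : ℚ) * (3 * S2 + S3)) + 3 * S2 + S3
      = (3 * MvPolynomial.C (-1/3 : ℚ)) * (3 * S2 + S3) + (3 * S2 + S3) := by ring
    _ = 0 := by rw [hc]; ring

/-- The substitution `Xₙ ↦ rr n`. -/
noncomputable def psi : A →ₐ[ℚ] A := MvPolynomial.aeval rr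

lemma map_PP : PowerSeries.map (psi : A →+* A) PP = G := by
  ext n
  rw [PowerSeries.coeff_map]
  simp only [PP, G, PowerSeries.coeff_mk]
  split
  · next h => subst h; simp [rr_zero]
  · simp [psi]

lemma psi_coeff_pow (e n : ℕ) : psi (PowerSeries.coeff n (PP^e)) = PowerSeries.coeff n (G^e) := by
  have h := PowerSeries.coeff_map (f := (psi : A →+* A)) n (PP^e)
  rw [map_pow, map_PP] at h
  exact h.symm

lemma coeff_E (k : ℕ) : (genC^3).coeff ((k : ℤ)+1) =
    3 * MvPolynomial.X (k+3) + (3 * PowerSeries.coeff (k+2) (PP^2) + PowerSeries.coeff (k+1) (PP^3)) := by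
  have hexp : genC^3 =
      (HahnSeries.single (-1 : ℤ) 1)^3
        + ((HahnSeries.single (-1 : ℤ) 1)^2 * HahnSeries.ofPowerSeries ℤ A PP
          + (HahnSeries.single (-1 : ℤ) 1)^2 * HahnSeries.ofPowerSeries ℤ A PP
          + (HahnSeries.single (-1 : ℤ) 1)^2 * HahnSeries.ofPowerSeries ℤ A PP)
        + (HahnSeries.single (-1 : ℤ) 1 * (HahnSeries.ofPowerSeries ℤ A PP)^2
          + HahnSeries.single (-1 : ℤ) 1 * (HahnSeries.ofPowerSeries ℤ A PP)^2
          + HahnSeries.single (-1 : ℤ) 1 * (HahnSeries.ofPowerSeries ℤ A PP)^2)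
        + (HahnSeries.ofPowerSeries ℤ A PP)^3 := by
    rw [show genC = HahnSeries.single (-1 : ℤ) 1 + HahnSeries.ofPowerSeries ℤ A PP from rfl]
    ring
  have hs2 : (HahnSeries.single (-1 : ℤ) 1 : LaurentSeries A)^2 = HahnSeries.single (-2 : ℤ) 1 := by
    rw [pow_two, HahnSeries.single_mul_single]; norm_num
  have h1 : ((HahnSeries.single (-1 : ℤ) 1 : LaurentSeries A)^3).coeff ((k : ℤ)+1) = 0 := by
    rw [pow_succ, hs2, HahnSeries.single_mul_single, mul_one]
    exact HahnSeries.coeff_single_of_ne (by omega)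
  have h2 : ((HahnSeries.single (-1 : ℤ) 1 : LaurentSeries A)^2
      * HahnSeries.ofPowerSeries ℤ A PP).coeff ((k : ℤ)+1) = MvPolynomial.X (k+3) := by
    rw [hs2, show ((k : ℤ)+1) = ((k+3 : ℕ) : ℤ) + (-2) by push_cast; ring,
      HahnSeries.coeff_single_mul_add, one_mul, HahnSeries.ofPowerSeries_apply_coeff]
    simp [PP]
  have h3 : ((HahnSeries.single (-1 : ℤ) 1 : LaurentSeries A)
      * (HahnSeries.ofPowerSeries ℤ A PP)^2).coeff ((k : ℤ)+1) = PowerSeries.coeff (k+2) (PP^2) := by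
    rw [← map_pow, show ((k : ℤ)+1) = ((k+2 : ℕ) : ℤ) + (-1) by push_cast; ring,
      HahnSeries.coeff_single_mul_add, one_mul, HahnSeries.ofPowerSeries_apply_coeff]
  have h4 : (((HahnSeries.ofPowerSeries ℤ A PP))^3).coeff ((k : ℤ)+1) = PowerSeries.coeff (k+1) (PP^3) := by
    rw [← map_pow, show ((k : ℤ)+1) = ((k+1 : ℕ) : ℤ) by push_cast; ring,
      HahnSeries.ofPowerSeries_apply_coeff]
  rw [hexp]
  simp only [HahnSeries.coeff_add, h1, h2, h3, h4]
  ring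

lemma psi_E (k : ℕ) : psi ((genC^3).coeff ((k : ℤ)+1)) = 0 := by
  rw [coeff_E]
  simp only [map_add, map_mul, map_ofNat, psi_coeff_pow]
  rw [show psi (MvPolynomial.X (k+3)) = rr (k+3) from MvPolynomial.aeval_X _ _]
  linear_combination rr_key k


lemma rr_supported (n : ℕ) : rr n ∈ MvPolynomial.supported ℚ ({1, 2} : Set ℕ) := by
  induction n using Nat.strong_induction_on with
  | _ n ih =>
    match n with
    | 0 => rw [rr_zero]; exact zero_mem _
    | 1 => rw [rr_one]; exact Algebra.subset_adjoin ⟨1, by simp, rfl⟩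
    | 2 => rw [rr_two]; exact Algebra.subset_adjoin ⟨2, by simp, rfl⟩
    | (n+3) =>
      rw [rr_eq]
      have hC : (MvPolynomial.C (-1/3 : ℚ) : A) ∈ MvPolynomial.supported ℚ ({1, 2} : Set ℕ) :=
        Subalgebra.algebraMap_mem _ (-1/3 : ℚ)
      have h3 : ((3 : A)) ∈ MvPolynomial.supported ℚ ({1, 2} : Set ℕ) := by
        have := Subalgebra.algebraMap_mem (MvPolynomial.supported ℚ ({1, 2} : Set ℕ)) (3 : ℚ)
        rwa [show (algebraMap ℚ A) (3 : ℚ) = (3 : A) from map_ofNat _ 3] at this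
      refine mul_mem hC (add_mem (mul_mem h3 (Subalgebra.sum_mem _ fun j hj => ?_))
        (Subalgebra.sum_mem _ fun j hj => Subalgebra.sum_mem _ fun l hl => ?_))
      · rw [Finset.mem_range] at hj
        exact mul_mem (ih j (by omega)) (ih (n+2-j) (by omega))
      · rw [Finset.mem_range] at hj hl
        exact mul_mem (mul_mem (ih j (by omega)) (ih l (by omega))) (ih (n+1-j-l) (by omega))

lemma rr_hom (n : ℕ) : MvPolynomial.IsWeightedHomogeneous (fun j : ℕ => j + 1) (rr n) (n + 1) := by
  induction n using Nat.strong_induction_on with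
  | _ n ih =>
    match n with
    | 0 => rw [rr_zero]; exact MvPolynomial.isWeightedHomogeneous_zero _ _ _
    | 1 => rw [rr_one]; exact MvPolynomial.isWeightedHomogeneous_X _ _ _
    | 2 => rw [rr_two]; exact MvPolynomial.isWeightedHomogeneous_X _ _ _
    | (n+3) =>
      rw [rr_eq]
      have hC := MvPolynomial.isWeightedHomogeneous_C (R := ℚ) (fun j : ℕ => j + 1) (-1/3 : ℚ)
      have h3 : MvPolynomial.IsWeightedHomogeneous (fun j : ℕ => j + 1) ((3 : A)) 0 := by
        have := MvPolynomial.isWeightedHomogeneous_C (R := ℚ) (fun j : ℕ => j + 1) (3 : ℚ)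
        rwa [show (MvPolynomial.C (3 : ℚ) : A) = (3 : A) from map_ofNat _ 3] at this
      have hS2 : MvPolynomial.IsWeightedHomogeneous (fun j : ℕ => j + 1)
          (∑ j ∈ Finset.range (n+3), rr j * rr (n+2 - j)) (n+3+1) := by
        refine MvPolynomial.IsWeightedHomogeneous.sum _ _ _ fun j hj => ?_
        rw [Finset.mem_range] at hj
        have h := (ih j (by omega)).mul (ih (n+2-j) (by omega))
        rwa [show j + 1 + (n + 2 - j + 1) = n + 3 + 1 by omega] at h
      have hS3 : MvPolynomial.IsWeightedHomogeneous (fun j : ℕ => j + 1)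
          (∑ j ∈ Finset.range (n+2), ∑ l ∈ Finset.range (n+2 - j),
            rr j * rr l * rr (n+1 - j - l)) (n+3+1) := by
        refine MvPolynomial.IsWeightedHomogeneous.sum _ _ _ fun j hj => ?_
        refine MvPolynomial.IsWeightedHomogeneous.sum _ _ _ fun l hl => ?_
        rw [Finset.mem_range] at hj hl
        have h := ((ih j (by omega)).mul (ih l (by omega))).mul (ih (n+1-j-l) (by omega))
        rwa [show j + 1 + (l + 1) + (n + 1 - j - l + 1) = n + 3 + 1 by omega] at h
      have hS2' := h3.mul hS2
      rw [zero_add] at hS2'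
      have h := hC.mul (hS2'.add hS3)
      rwa [zero_add] at h

lemma PP_pow_supported (e n : ℕ) :
    PowerSeries.coeff n (PP^e) ∈ MvPolynomial.supported ℚ {i : ℕ | 1 ≤ i ∧ i ≤ n} := by
  induction e generalizing n with
  | zero =>
    rw [pow_zero, PowerSeries.coeff_one]
    split
    · exact one_mem _
    · exact zero_mem _
  | succ e ihe =>
    rw [pow_succ, PowerSeries.coeff_mul]
    refine Subalgebra.sum_mem _ fun p hp => ?_
    rw [Finset.HasAntidiagonal.mem_antidiagonal] at hp
    refine mul_mem (MvPolynomial.supported_mono (fun i hi => ?_) (ihe p.1)) ?_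
    · simp only [Set.mem_setOf_eq] at hi ⊢; omega
    · simp only [PP, PowerSeries.coeff_mk]
      split
      · exact zero_mem _
      · next h =>
          exact Algebra.subset_adjoin ⟨p.2, by simp only [Set.mem_setOf_eq]; omega, rfl⟩

lemma QQ_supported (k : ℕ) :
    3 * PowerSeries.coeff (k+2) (PP^2) + PowerSeries.coeff (k+1) (PP^3)
      ∈ MvPolynomial.supported ℚ {i : ℕ | 1 ≤ i ∧ i ≤ k+2} := by
  have h3 : ((3 : A)) ∈ MvPolynomial.supported ℚ {i : ℕ | 1 ≤ i ∧ i ≤ k+2} := by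
    have := Subalgebra.algebraMap_mem (MvPolynomial.supported ℚ {i : ℕ | 1 ≤ i ∧ i ≤ k+2}) (3 : ℚ)
    rwa [show (algebraMap ℚ A) (3 : ℚ) = (3 : A) from map_ofNat _ 3] at this
  exact add_mem (mul_mem h3 (PP_pow_supported 2 (k+2)))
    (MvPolynomial.supported_mono
      (fun i hi => by simp only [Set.mem_setOf_eq] at hi ⊢; omega) (PP_pow_supported 3 (k+1)))

lemma E_supported (k : ℕ) :
    (genC^3).coeff ((k : ℤ)+1) ∈ MvPolynomial.supported ℚ {i : ℕ | 1 ≤ i ∧ i ≤ k+3} := by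
  rw [coeff_E]
  have h3 : ((3 : A)) ∈ MvPolynomial.supported ℚ {i : ℕ | 1 ≤ i ∧ i ≤ k+3} := by
    have := Subalgebra.algebraMap_mem (MvPolynomial.supported ℚ {i : ℕ | 1 ≤ i ∧ i ≤ k+3}) (3 : ℚ)
    rwa [show (algebraMap ℚ A) (3 : ℚ) = (3 : A) from map_ofNat _ 3] at this
  exact add_mem
    (mul_mem h3 (Algebra.subset_adjoin ⟨k+3, by simp only [Set.mem_setOf_eq]; omega, rfl⟩))
    (MvPolynomial.supported_mono
      (fun i hi => by simp only [Set.mem_setOf_eq] at hi ⊢; omega) (QQ_supported k))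

lemma sub_aeval_mem (f : ℕ → A) (S : Set ℕ) {p : A} (hp : p ∈ MvPolynomial.supported ℚ S) :
    p - MvPolynomial.aeval f p ∈ Ideal.span ((fun n => MvPolynomial.X n - f n) '' S) := by
  refine Algebra.adjoin_induction (s := MvPolynomial.X '' S)
    (p := fun x _ => x - MvPolynomial.aeval f x ∈
      Ideal.span ((fun n => MvPolynomial.X n - f n) '' S)) ?_ ?_ ?_ ?_ hp
  · rintro x ⟨n, hn, rfl⟩
    rw [MvPolynomial.aeval_X]
    exact Ideal.subset_span ⟨n, hn, rfl⟩
  · intro r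
    rw [AlgHom.commutes, sub_self]
    exact zero_mem _
  · intro x y hx hy px py
    rw [map_add, show x + y - (MvPolynomial.aeval f x + MvPolynomial.aeval f y)
      = (x - MvPolynomial.aeval f x) + (y - MvPolynomial.aeval f y) by ring]
    exact add_mem px py
  · intro x y hx hy px py
    rw [map_mul, show x * y - MvPolynomial.aeval f x * MvPolynomial.aeval f y
      = x * (y - MvPolynomial.aeval f y) + (x - MvPolynomial.aeval f x) * MvPolynomial.aeval f y
      by ring]
    exact add_mem (Ideal.mul_mem_left _ _ py) (Ideal.mul_mem_right _ _ px)

lemma aeval_supported_eq (f : ℕ → A) (S : Set ℕ) (hf : ∀ n ∈ S, f n = MvPolynomial.X n)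
    {p : A} (hp : p ∈ MvPolynomial.supported ℚ S) : MvPolynomial.aeval f p = p := by
  refine Algebra.adjoin_induction (s := MvPolynomial.X '' S)
    (p := fun x _ => MvPolynomial.aeval f x = x) ?_ ?_ ?_ ?_ hp
  · rintro x ⟨n, hn, rfl⟩
    rw [MvPolynomial.aeval_X, hf n hn]
  · intro r; rw [AlgHom.commutes]
  · intro x y _ _ px py; rw [map_add, px, py]
  · intro x y _ _ px py; rw [map_mul, px, py]

end Stmt6Aux

open Stmt6Aux in
/-- for `m > 3` with `3 ∤ m`, there exist unique polynomials
`Rₖ ∈ ℚ[C₋₁, C₋₂]` (`k = 1, …, m-1`, indexed here by `i = k - 1 : Fin (m-1)`),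
homogeneous of weight `k + 3` for the weights `w(C₋₁) = 2`, `w(C₋₂) = 3`
(i.e. `w(C₋ᵢ) = i+1`), such that the polynomials `Ẽₖ = C₋₍ₖ₊₂₎ + Rₖ(C₋₁, C₋₂)`
generate the same ideal `I_{m-1} = ⟨E₁, …, E_{m-1}⟩`, where `Eₖ = (C³)₋ₖ`. -/
theorem stmt6 (m : ℕ) (hm : 3 < m) (hm3 : ¬ (3 ∣ m)) :
    ∃! R : Fin (m - 1) → MvPolynomial ℕ ℚ,
      (∀ i, R i ∈ MvPolynomial.supported ℚ ({1, 2} : Set ℕ)) ∧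
      (∀ i, MvPolynomial.IsWeightedHomogeneous (fun j : ℕ => j + 1) (R i) ((i : ℕ) + 4)) ∧
      Ideal.span (Set.range fun i : Fin (m - 1) =>
          (genC ^ 3).coeff (((i : ℕ) : ℤ) + 1)) =
        Ideal.span (Set.range fun i : Fin (m - 1) =>
          MvPolynomial.X ((i : ℕ) + 3) + R i) := by
  classical
  set R₀ : Fin (m - 1) → MvPolynomial ℕ ℚ := fun i => - rr ((i : ℕ) + 3) with hR₀
  have hTgen : ∀ i : Fin (m - 1), MvPolynomial.X ((i : ℕ) + 3) + R₀ i
      = MvPolynomial.X ((i : ℕ) + 3) - rr ((i : ℕ) + 3) := by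
    intro i; rw [hR₀, sub_eq_add_neg]
  have key_span :
      Ideal.span (Set.range fun i : Fin (m - 1) => (genC ^ 3).coeff (((i : ℕ) : ℤ) + 1))
        = Ideal.span (Set.range fun i : Fin (m - 1) =>
            MvPolynomial.X ((i : ℕ) + 3) + R₀ i) := by
    apply le_antisymm
    · rw [Ideal.span_le]
      rintro x ⟨i, rfl⟩
      have h1 := sub_aeval_mem rr _ (E_supported (i : ℕ))
      have h2 : Ideal.span ((fun n => MvPolynomial.X n - rr n) '' {j : ℕ | 1 ≤ j ∧ j ≤ (i : ℕ) + 3})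
          ≤ Ideal.span (Set.range fun i : Fin (m - 1) =>
              MvPolynomial.X ((i : ℕ) + 3) + R₀ i) := by
        rw [Ideal.span_le]
        rintro y ⟨n, hn, rfl⟩
        simp only [Set.mem_setOf_eq] at hn
        by_cases h3 : n ≤ 2
        · have : n = 1 ∨ n = 2 := by omega
          rcases this with rfl | rfl
          · show MvPolynomial.X 1 - rr 1 ∈ _
            rw [rr_one, sub_self]; exact SetLike.mem_coe.mpr (zero_mem _)
          · show MvPolynomial.X 2 - rr 2 ∈ _
            rw [rr_two, sub_self]; exact SetLike.mem_coe.mpr (zero_mem _)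
        · have hlt : n - 3 < m - 1 := by have := i.isLt; omega
          refine Ideal.subset_span ⟨⟨n - 3, hlt⟩, ?_⟩
          show MvPolynomial.X ((n - 3) + 3) + R₀ ⟨n - 3, hlt⟩ = MvPolynomial.X n - rr n
          rw [hTgen ⟨n - 3, hlt⟩]
          simp only []
          rw [show n - 3 + 3 = n by omega]
      have h0 : (MvPolynomial.aeval rr) ((genC ^ 3).coeff (((i : ℕ) : ℤ) + 1)) = 0 := psi_E (i : ℕ)
      rw [h0, sub_zero] at h1
      exact h2 h1
    · rw [Ideal.span_le]
      rintro x ⟨i, rfl⟩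
      have claim : ∀ k : ℕ, k < m - 1 → MvPolynomial.X (k + 3) - rr (k + 3) ∈
          Ideal.span (Set.range fun i : Fin (m - 1) =>
            (genC ^ 3).coeff (((i : ℕ) : ℤ) + 1)) := by
        intro k
        induction k using Nat.strong_induction_on with
        | _ k ih =>
          intro hk
          have hQ := sub_aeval_mem rr _ (QQ_supported k)
          have hle : Ideal.span ((fun n => MvPolynomial.X n - rr n) '' {j : ℕ | 1 ≤ j ∧ j ≤ k + 2})
              ≤ Ideal.span (Set.range fun i : Fin (m - 1) =>
                  (genC ^ 3).coeff (((i : ℕ) : ℤ) + 1)) := by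
            rw [Ideal.span_le]
            rintro y ⟨n, hn, rfl⟩
            simp only [Set.mem_setOf_eq] at hn
            by_cases h3 : n ≤ 2
            · have : n = 1 ∨ n = 2 := by omega
              rcases this with rfl | rfl
              · show MvPolynomial.X 1 - rr 1 ∈ _
                rw [rr_one, sub_self]; exact SetLike.mem_coe.mpr (zero_mem _)
              · show MvPolynomial.X 2 - rr 2 ∈ _
                rw [rr_two, sub_self]; exact SetLike.mem_coe.mpr (zero_mem _)
            · have h := ih (n - 3) (by omega) (by omega)
              rwa [show n - 3 + 3 = n by omega] at h
          have hmem := hle hQ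
          have hE : (genC ^ 3).coeff ((k : ℤ) + 1) ∈
              Ideal.span (Set.range fun i : Fin (m - 1) =>
                (genC ^ 3).coeff (((i : ℕ) : ℤ) + 1)) :=
            Ideal.subset_span ⟨⟨k, hk⟩, rfl⟩
          have hpsiQ : (MvPolynomial.aeval rr)
              (3 * PowerSeries.coeff (k+2) (PP ^ 2) + PowerSeries.coeff (k+1) (PP ^ 3))
              = -(3 * rr (k + 3)) := by
            have h0 := psi_E k
            rw [coeff_E] at h0
            simp only [map_add, map_mul, map_ofNat, MvPolynomial.aeval_X, psi] at h0 ⊢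
            linear_combination h0
          have h3mem : (3 : MvPolynomial ℕ ℚ) * (MvPolynomial.X (k + 3) - rr (k + 3)) ∈
              Ideal.span (Set.range fun i : Fin (m - 1) =>
                (genC ^ 3).coeff (((i : ℕ) : ℤ) + 1)) := by
            have heq : (3 : MvPolynomial ℕ ℚ) * (MvPolynomial.X (k + 3) - rr (k + 3))
                = (genC ^ 3).coeff ((k : ℤ) + 1)
                  - ((3 * PowerSeries.coeff (k+2) (PP ^ 2) + PowerSeries.coeff (k+1) (PP ^ 3))
                    - (MvPolynomial.aeval rr)
                      (3 * PowerSeries.coeff (k+2) (PP ^ 2)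
                        + PowerSeries.coeff (k+1) (PP ^ 3))) := by
              rw [coeff_E, hpsiQ]; ring
            rw [heq]
            exact sub_mem hE hmem
          have hthird : MvPolynomial.X (k + 3) - rr (k + 3)
              = MvPolynomial.C (1/3 : ℚ)
                * ((3 : MvPolynomial ℕ ℚ) * (MvPolynomial.X (k + 3) - rr (k + 3))) := by
            rw [← mul_assoc, show MvPolynomial.C (1/3 : ℚ) * (3 : MvPolynomial ℕ ℚ) = 1 by
              rw [show (3 : MvPolynomial ℕ ℚ) = MvPolynomial.C (3 : ℚ) from (map_ofNat _ 3).symm,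
                ← MvPolynomial.C_mul]; norm_num, one_mul]
          rw [hthird]
          exact Ideal.mul_mem_left _ _ h3mem
      have h := claim (i : ℕ) i.isLt
      rwa [← hTgen i] at h
  refine ⟨R₀, ⟨fun i => neg_mem (rr_supported _), fun i => ?_, key_span⟩, ?_⟩
  · have h := rr_hom ((i : ℕ) + 3)
    rw [show (i : ℕ) + 3 + 1 = (i : ℕ) + 4 by omega] at h
    have h' := (MvPolynomial.weightedHomogeneousSubmodule ℚ (fun j : ℕ => j + 1)
      ((i : ℕ) + 4)).neg_mem ((MvPolynomial.mem_weightedHomogeneousSubmodule _ _ _ _).mpr h)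
    exact (MvPolynomial.mem_weightedHomogeneousSubmodule _ _ _ _).mp h'
  · rintro R' ⟨hsup', hhom', hspan'⟩
    funext i
    set fρ : ℕ → MvPolynomial ℕ ℚ := fun n =>
      if h : 3 ≤ n ∧ n ≤ m + 1 then -R' ⟨n - 3, by omega⟩ else MvPolynomial.X n with hfρ
    have hfix : ∀ p ∈ MvPolynomial.supported ℚ ({1, 2} : Set ℕ),
        MvPolynomial.aeval (R := ℚ) fρ p = p := by
      intro p hp
      refine aeval_supported_eq fρ _ ?_ hp
      rintro n (rfl | rfl) <;> · rw [hfρ]; exact dif_neg (by omega)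
    have hXeval : ∀ j : Fin (m - 1),
        MvPolynomial.aeval (R := ℚ) fρ (MvPolynomial.X ((j : ℕ) + 3)) = -R' j := by
      intro j
      rw [MvPolynomial.aeval_X]
      simp only [hfρ]
      rw [dif_pos (show 3 ≤ (j : ℕ) + 3 ∧ (j : ℕ) + 3 ≤ m + 1 from
        ⟨by omega, by have := j.isLt; omega⟩)]
      simp only [Nat.add_sub_cancel, Fin.eta]
    have hker : ∀ y ∈ Ideal.span (Set.range fun i : Fin (m - 1) =>
        MvPolynomial.X ((i : ℕ) + 3) + R' i), MvPolynomial.aeval (R := ℚ) fρ y = 0 := by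
      intro y hy
      have hsub : (Set.range fun i : Fin (m - 1) => MvPolynomial.X ((i : ℕ) + 3) + R' i)
          ⊆ (RingHom.ker ((MvPolynomial.aeval (R := ℚ) fρ : MvPolynomial ℕ ℚ →ₐ[ℚ] MvPolynomial ℕ ℚ) :
              MvPolynomial ℕ ℚ →+* MvPolynomial ℕ ℚ) : Set (MvPolynomial ℕ ℚ)) := by
        rintro y ⟨j, rfl⟩
        simp only [SetLike.mem_coe, RingHom.mem_ker]
        show MvPolynomial.aeval (R := ℚ) fρ (MvPolynomial.X ((j : ℕ) + 3) + R' j) = 0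
        rw [map_add, hXeval j, hfix _ (hsup' j)]
        ring
      exact Ideal.span_le.mpr hsub hy
    have hmem : MvPolynomial.X ((i : ℕ) + 3) + R₀ i ∈
        Ideal.span (Set.range fun i : Fin (m - 1) => MvPolynomial.X ((i : ℕ) + 3) + R' i) := by
      rw [← hspan', key_span]
      exact Ideal.subset_span ⟨i, rfl⟩
    have h0 := hker _ hmem
    rw [map_add, hXeval i, hfix _ (neg_mem (rr_supported _))] at h0
    have : R' i = R₀ i := by
      rw [hR₀]
      have h1 : -R' i + -rr ((i : ℕ) + 3) = 0 := h0
      linear_combination -h1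
    exact this
end

section
/- Let I ⊆ Q[C_{-1},...,C_{-7}] be the ideal generated by E_1,...,E_5 where E_k = (C^3)_{-k}. Then the polynomials C_{-3} + C_{-1}^2, C_{-4} + 2C_{-1}C_{-2}, C_{-5} + C_{-2}^2 - (5/3)C_{-1}^3, C_{-6} - 5C_{-1}^2C_{-2}, and C_{-7} + (10/3)C_{-1}^4 - 5C_{-1}C_{-2}^2 generate the same ideal I. -/
open MvPolynomial

noncomputable def fAux : PowerSeries (MvPolynomial ℕ ℚ) :=
  PowerSeries.mk fun i => if i = 0 then 0 else MvPolynomial.X i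

noncomputable def gAux : PowerSeries (MvPolynomial ℕ ℚ) := 1 + PowerSeries.X * fAux

theorem genC_eq : genC = HahnSeries.single (-1 : ℤ) 1 *
    HahnSeries.ofPowerSeries ℤ (MvPolynomial ℕ ℚ) gAux := by
  rw [gAux, RingHom.map_add, RingHom.map_one, RingHom.map_mul, HahnSeries.ofPowerSeries_X,
    mul_add, mul_one, ← mul_assoc, HahnSeries.single_mul_single, one_mul,
    show (-1 : ℤ) + 1 = 0 by ring, HahnSeries.single_zero_one, one_mul]
  rfl

theorem genC_cube : genC ^ 3 = HahnSeries.single (-3 : ℤ) 1 *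
    HahnSeries.ofPowerSeries ℤ (MvPolynomial ℕ ℚ) (gAux ^ 3) := by
  rw [genC_eq, mul_pow, HahnSeries.single_pow, RingHom.map_pow]
  norm_num

theorem coeff_cube (k : ℕ) : (genC ^ 3).coeff ((k : ℤ) - 3) =
    PowerSeries.coeff k (gAux ^ 3) := by
  rw [genC_cube, show ((k:ℤ) - 3) = (k:ℤ) + (-3) by ring, HahnSeries.coeff_single_mul_add,
    one_mul, HahnSeries.ofPowerSeries_apply_coeff]

theorem gcube : gAux ^ 3 = 1 + PowerSeries.C (3 : MvPolynomial ℕ ℚ) *(PowerSeries.X*fAux)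
    + PowerSeries.C (3 : MvPolynomial ℕ ℚ) *(PowerSeries.X^2*fAux^2) + PowerSeries.X^3*fAux^3 := by
  have h : (PowerSeries.C (3 : MvPolynomial ℕ ℚ)) = 3 := by
    rw [show (3 : MvPolynomial ℕ ℚ) = ((3:ℕ) : MvPolynomial ℕ ℚ) by norm_num, map_natCast]
    norm_num
  rw [gAux, h]; ring

theorem c4 : PowerSeries.coeff 4 (gAux ^ 3) = 3 * X 3 + 3 * X 1^2 := by
  rw [gcube]
  simp [fAux, PowerSeries.coeff_mul, pow_succ, Finset.Nat.sum_antidiagonal_eq_sum_range_succ_mk,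
    Finset.sum_range_succ, PowerSeries.coeff_X_pow_mul', PowerSeries.coeff_X]

theorem c5 : PowerSeries.coeff 5 (gAux ^ 3) = 3 * X 4 + 6 * X 1 * X 2 := by
  rw [gcube]
  simp [fAux, PowerSeries.coeff_mul, pow_succ, Finset.Nat.sum_antidiagonal_eq_sum_range_succ_mk,
    Finset.sum_range_succ, PowerSeries.coeff_X_pow_mul', PowerSeries.coeff_X]
  all_goals ring

set_option maxHeartbeats 2000000 in
theorem c6 : PowerSeries.coeff 6 (gAux ^ 3) =
    3 * X 5 + 6 * X 1 * X 3 + 3 * X 2^2 + X 1^3 := by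
  rw [gcube]
  simp [fAux, PowerSeries.coeff_mul, pow_succ, Finset.Nat.sum_antidiagonal_eq_sum_range_succ_mk,
    Finset.sum_range_succ, PowerSeries.coeff_X_pow_mul', PowerSeries.coeff_X]
  all_goals ring

set_option maxHeartbeats 2000000 in
theorem c7 : PowerSeries.coeff 7 (gAux ^ 3) =
    3 * X 6 + 6 * X 1 * X 4 + 6 * X 2 * X 3 + 3 * X 1^2 * X 2 := by
  rw [gcube]
  simp [fAux, PowerSeries.coeff_mul, pow_succ, Finset.Nat.sum_antidiagonal_eq_sum_range_succ_mk,
    Finset.sum_range_succ, PowerSeries.coeff_X_pow_mul', PowerSeries.coeff_X]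
  all_goals ring

set_option maxHeartbeats 2000000 in
theorem c8 : PowerSeries.coeff 8 (gAux ^ 3) =
    3 * X 7 + 6 * X 1 * X 5 + 6 * X 2 * X 4 + 3 * X 3^2 + 3 * X 1^2 * X 3 + 3 * X 1 * X 2^2 := by
  rw [gcube]
  simp [fAux, PowerSeries.coeff_mul, pow_succ, Finset.Nat.sum_antidiagonal_eq_sum_range_succ_mk,
    Finset.sum_range_succ, PowerSeries.coeff_X_pow_mul', PowerSeries.coeff_X]
  all_goals ring

theorem thirdMem {I : Ideal (MvPolynomial ℕ ℚ)} {p : MvPolynomial ℕ ℚ}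
    (h : MvPolynomial.C (3:ℚ) * p ∈ I) : p ∈ I := by
  have h2 := I.mul_mem_left (MvPolynomial.C (1/3 : ℚ)) h
  rwa [← mul_assoc, ← MvPolynomial.C_mul, show (1/3 : ℚ) * 3 = 1 by norm_num,
    MvPolynomial.C_1, one_mul] at h2

theorem hC3 : (MvPolynomial.C (3:ℚ) : MvPolynomial ℕ ℚ) = 3 := by
  rw [show (3:ℚ) = ((3:ℕ):ℚ) by norm_num, map_natCast]; norm_num

theorem hC6 : (MvPolynomial.C (6:ℚ) : MvPolynomial ℕ ℚ) = 6 := by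
  rw [show (6:ℚ) = ((6:ℕ):ℚ) by norm_num, map_natCast]; norm_num

theorem h53 : (3 : MvPolynomial ℕ ℚ) * MvPolynomial.C (5/3 : ℚ) = 5 := by
  rw [← hC3, ← MvPolynomial.C_mul, show (3:ℚ) * (5/3) = 5 by norm_num,
    show (5:ℚ) = ((5:ℕ):ℚ) by norm_num, map_natCast]; norm_num

theorem h103 : (3 : MvPolynomial ℕ ℚ) * MvPolynomial.C (10/3 : ℚ) = 10 := by
  rw [← hC3, ← MvPolynomial.C_mul, show (3:ℚ) * (10/3) = 10 by norm_num,
    show (10:ℚ) = ((10:ℕ):ℚ) by norm_num, map_natCast]; norm_num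

/-- the ideal `I = ⟨E₁, …, E₅⟩` with `Eₖ = (C³)₋ₖ` coincides with the
ideal generated by `C₋₃ + C₋₁²`, `C₋₄ + 2C₋₁C₋₂`, `C₋₅ + C₋₂² - (5/3)C₋₁³`,
`C₋₆ - 5C₋₁²C₋₂` and `C₋₇ + (10/3)C₋₁⁴ - 5C₋₁C₋₂²`. -/
theorem stmt8 :
    Ideal.span ({(genC ^ 3).coeff 1, (genC ^ 3).coeff 2, (genC ^ 3).coeff 3,
        (genC ^ 3).coeff 4, (genC ^ 3).coeff 5} : Set (MvPolynomial ℕ ℚ)) =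
      Ideal.span ({X 3 + X 1 ^ 2,
        X 4 + 2 * X 1 * X 2,
        X 5 + X 2 ^ 2 - MvPolynomial.C (5 / 3 : ℚ) * X 1 ^ 3,
        X 6 - 5 * X 1 ^ 2 * X 2,
        X 7 + MvPolynomial.C (10 / 3 : ℚ) * X 1 ^ 4 - 5 * X 1 * X 2 ^ 2} :
          Set (MvPolynomial ℕ ℚ)) := by
  set G1 : MvPolynomial ℕ ℚ := X 3 + X 1 ^ 2 with hG1def
  set G2 : MvPolynomial ℕ ℚ := X 4 + 2 * X 1 * X 2 with hG2def
  set G3 : MvPolynomial ℕ ℚ := X 5 + X 2 ^ 2 - MvPolynomial.C (5 / 3 : ℚ) * X 1 ^ 3 with hG3def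
  set G4 : MvPolynomial ℕ ℚ := X 6 - 5 * X 1 ^ 2 * X 2 with hG4def
  set G5 : MvPolynomial ℕ ℚ :=
    X 7 + MvPolynomial.C (10 / 3 : ℚ) * X 1 ^ 4 - 5 * X 1 * X 2 ^ 2 with hG5def
  have hE1 : (genC ^ 3).coeff 1 = MvPolynomial.C (3:ℚ) * G1 := by
    rw [show (1:ℤ) = ((4:ℕ):ℤ) - 3 by norm_num, coeff_cube, c4, hC3, hG1def]; ring
  have hE2 : (genC ^ 3).coeff 2 = MvPolynomial.C (3:ℚ) * G2 := by
    rw [show (2:ℤ) = ((5:ℕ):ℤ) - 3 by norm_num, coeff_cube, c5, hC3, hG2def]; ring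
  have hE3 : (genC ^ 3).coeff 3 = MvPolynomial.C (3:ℚ) * G3
      + MvPolynomial.C (6:ℚ) * (X 1 * G1) := by
    rw [show (3:ℤ) = ((6:ℕ):ℤ) - 3 by norm_num, coeff_cube, c6, hC3, hC6, hG3def, hG1def]
    linear_combination (X 1 ^ 3 : MvPolynomial ℕ ℚ) * h53
  have hE4 : (genC ^ 3).coeff 4 = MvPolynomial.C (3:ℚ) * G4
      + MvPolynomial.C (6:ℚ) * (X 1 * G2) + MvPolynomial.C (6:ℚ) * (X 2 * G1) := by
    rw [show (4:ℤ) = ((7:ℕ):ℤ) - 3 by norm_num, coeff_cube, c7, hC3, hC6, hG4def, hG2def,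
      hG1def]
    ring
  have hE5 : (genC ^ 3).coeff 5 = MvPolynomial.C (3:ℚ) * G5
      + MvPolynomial.C (6:ℚ) * (X 1 * G3) + MvPolynomial.C (6:ℚ) * (X 2 * G2)
      + MvPolynomial.C (3:ℚ) * (G1 * G1) - MvPolynomial.C (3:ℚ) * (X 1 ^ 2 * G1) := by
    rw [show (5:ℤ) = ((8:ℕ):ℤ) - 3 by norm_num, coeff_cube, c8, hC3, hC6, hG5def, hG3def,
      hG2def, hG1def]
    linear_combination (- X 1 ^ 4 : MvPolynomial ℕ ℚ) * h103
      + (2 * X 1 ^ 4 : MvPolynomial ℕ ℚ) * h53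
  apply le_antisymm
  · rw [Ideal.span_le]
    rintro p hp
    simp only [Set.mem_insert_iff, Set.mem_singleton_iff] at hp
    have m1 : G1 ∈ Ideal.span {G1, G2, G3, G4, G5} := Ideal.subset_span (by simp)
    have m2 : G2 ∈ Ideal.span {G1, G2, G3, G4, G5} := Ideal.subset_span (by simp)
    have m3 : G3 ∈ Ideal.span {G1, G2, G3, G4, G5} := Ideal.subset_span (by simp)
    have m4 : G4 ∈ Ideal.span {G1, G2, G3, G4, G5} := Ideal.subset_span (by simp)
    have m5 : G5 ∈ Ideal.span {G1, G2, G3, G4, G5} := Ideal.subset_span (by simp)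
    rcases hp with rfl|rfl|rfl|rfl|rfl
    · rw [hE1]; exact Ideal.mul_mem_left _ _ m1
    · rw [hE2]; exact Ideal.mul_mem_left _ _ m2
    · rw [hE3]
      exact Ideal.add_mem _ (Ideal.mul_mem_left _ _ m3)
        (Ideal.mul_mem_left _ _ (Ideal.mul_mem_left _ _ m1))
    · rw [hE4]
      exact Ideal.add_mem _ (Ideal.add_mem _ (Ideal.mul_mem_left _ _ m4)
        (Ideal.mul_mem_left _ _ (Ideal.mul_mem_left _ _ m2)))
        (Ideal.mul_mem_left _ _ (Ideal.mul_mem_left _ _ m1))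
    · rw [hE5]
      refine Ideal.sub_mem _ (Ideal.add_mem _ (Ideal.add_mem _ (Ideal.add_mem _
        (Ideal.mul_mem_left _ _ m5)
        (Ideal.mul_mem_left _ _ (Ideal.mul_mem_left _ _ m3)))
        (Ideal.mul_mem_left _ _ (Ideal.mul_mem_left _ _ m2)))
        (Ideal.mul_mem_left _ _ (Ideal.mul_mem_left _ _ m1)))
        (Ideal.mul_mem_left _ _ (Ideal.mul_mem_left _ _ m1))
  · set IE := Ideal.span ({(genC ^ 3).coeff 1, (genC ^ 3).coeff 2, (genC ^ 3).coeff 3,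
      (genC ^ 3).coeff 4, (genC ^ 3).coeff 5} : Set (MvPolynomial ℕ ℚ)) with hIE
    have e1 : (genC ^ 3).coeff 1 ∈ IE := Ideal.subset_span (by simp)
    have e2 : (genC ^ 3).coeff 2 ∈ IE := Ideal.subset_span (by simp)
    have e3 : (genC ^ 3).coeff 3 ∈ IE := Ideal.subset_span (by simp)
    have e4 : (genC ^ 3).coeff 4 ∈ IE := Ideal.subset_span (by simp)
    have e5 : (genC ^ 3).coeff 5 ∈ IE := Ideal.subset_span (by simp)
    have g1 : G1 ∈ IE := thirdMem (hE1 ▸ e1)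
    have g2 : G2 ∈ IE := thirdMem (hE2 ▸ e2)
    have g3 : G3 ∈ IE := by
      refine thirdMem (p := G3) ?_
      have : MvPolynomial.C (3:ℚ) * G3 =
          (genC ^ 3).coeff 3 - MvPolynomial.C (6:ℚ) * (X 1 * G1) := by rw [hE3]; ring
      rw [this]
      exact Ideal.sub_mem _ e3 (Ideal.mul_mem_left _ _ (Ideal.mul_mem_left _ _ g1))
    have g4 : G4 ∈ IE := by
      refine thirdMem (p := G4) ?_
      have : MvPolynomial.C (3:ℚ) * G4 = (genC ^ 3).coeff 4
          - MvPolynomial.C (6:ℚ) * (X 1 * G2) - MvPolynomial.C (6:ℚ) * (X 2 * G1) := by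
        rw [hE4]; ring
      rw [this]
      exact Ideal.sub_mem _ (Ideal.sub_mem _ e4
        (Ideal.mul_mem_left _ _ (Ideal.mul_mem_left _ _ g2)))
        (Ideal.mul_mem_left _ _ (Ideal.mul_mem_left _ _ g1))
    have g5 : G5 ∈ IE := by
      refine thirdMem (p := G5) ?_
      have : MvPolynomial.C (3:ℚ) * G5 = (genC ^ 3).coeff 5
          - MvPolynomial.C (6:ℚ) * (X 1 * G3) - MvPolynomial.C (6:ℚ) * (X 2 * G2)
          - MvPolynomial.C (3:ℚ) * (G1 * G1) + MvPolynomial.C (3:ℚ) * (X 1 ^ 2 * G1) := by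
        rw [hE5]; ring
      rw [this]
      refine Ideal.add_mem _ (Ideal.sub_mem _ (Ideal.sub_mem _ (Ideal.sub_mem _ e5
        (Ideal.mul_mem_left _ _ (Ideal.mul_mem_left _ _ g3)))
        (Ideal.mul_mem_left _ _ (Ideal.mul_mem_left _ _ g2)))
        (Ideal.mul_mem_left _ _ (Ideal.mul_mem_left _ _ g1)))
        (Ideal.mul_mem_left _ _ (Ideal.mul_mem_left _ _ g1))
    rw [Ideal.span_le]
    rintro p hp
    simp only [Set.mem_insert_iff, Set.mem_singleton_iff] at hp
    rcases hp with rfl|rfl|rfl|rfl|rfl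
    exacts [g1, g2, g3, g4, g5]
end

section
/- Let K be a field of characteristic zero and suppose C = x + ∑_{i≥1} C_{-i}x^{-i} ∈ K((x^{-1})) satisfies C^3 ∈ K[x] and C_{-2} = 0. Then C^3 = x^3 + 3C_{-1}x. -/
lemma mul_coeff_zero_of_lt {K : Type*} [Field K] {s t : HahnSeries ℤ K} {a b : ℤ}
    (hs : ∀ m < a, s.coeff m = 0) (ht : ∀ m < b, t.coeff m = 0) :
    ∀ m < a + b, (s * t).coeff m = 0 := by
  intro m hm
  rw [HahnSeries.coeff_mul]
  refine Finset.sum_eq_zero fun ij hij => ?_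
  rw [Finset.mem_addAntidiagonal] at hij
  rcases lt_or_ge ij.1 a with h | h
  · rw [hs _ h, zero_mul]
  · rw [ht _ (by omega), mul_zero]

lemma Xmul_coeff {K : Type*} [Field K] (s : HahnSeries ℤ K) (n : ℤ) :
    (HahnSeries.single (-1 : ℤ) (1 : K) * s).coeff n = s.coeff (n + 1) := by
  have h := HahnSeries.coeff_single_mul_add (r := (1 : K)) (x := s) (a := n + 1) (b := (-1 : ℤ))
  rw [one_mul] at h
  convert h using 2
  omega

/-- if `C = x + ∑_{i≥1} C₋ᵢx⁻ⁱ ∈ K((x⁻¹))`, `K` of characteristic zero,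
satisfies `C³ ∈ K[x]` and `C₋₂ = 0`, then `C³ = x³ + 3C₋₁x`.
(`C.coeff n` is the coefficient of `x⁻ⁿ`; `x³ = HahnSeries.single (-3) 1` and
`x = HahnSeries.single (-1) 1`.) -/
theorem stmt10 (K : Type*) [Field K] [CharZero K]
    (C : LaurentSeries K)
    (hx : C.coeff (-1) = 1) (h0 : C.coeff 0 = 0)
    (hlow : ∀ n : ℤ, n < -1 → C.coeff n = 0)
    (hpoly : ∀ n : ℤ, 0 < n → (C ^ 3).coeff n = 0)
    (hc2 : C.coeff 2 = 0) :
    C ^ 3 = HahnSeries.single (-3 : ℤ) 1 + HahnSeries.single (-1 : ℤ) (3 * C.coeff 1) := by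
  set X : HahnSeries ℤ K := HahnSeries.single (-1 : ℤ) (1 : K) with hX
  set D : HahnSeries ℤ K := C - X with hDdef
  have hD : ∀ m : ℤ, m ≤ 0 → D.coeff m = 0 := by
    intro m hm
    rw [hDdef, HahnSeries.coeff_sub, hX, HahnSeries.coeff_single]
    rcases eq_or_ne m (-1) with rfl | hm1
    · simp [hx]
    · rw [if_neg hm1, sub_zero]
      rcases eq_or_ne m 0 with rfl | hm0
      · exact h0
      · exact hlow m (by omega)
  have hD1 : ∀ m : ℤ, m < 1 → D.coeff m = 0 := fun m hm => hD m (by omega)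
  have hDD : ∀ m : ℤ, m < 2 → (D * D).coeff m = 0 := fun m hm =>
    mul_coeff_zero_of_lt hD1 hD1 m (by omega)
  have hDDD : ∀ m : ℤ, m < 3 → (D * (D * D)).coeff m = 0 := fun m hm =>
    mul_coeff_zero_of_lt hD1 hDD m (by omega)
  have hC : C = X + D := by rw [hDdef]; ring
  have hexp : C ^ 3 = X * (X * X) + (X * (X * D) + X * (X * D) + X * (X * D))
      + (X * (D * D) + X * (D * D) + X * (D * D)) + D * (D * D) := by
    rw [hC]; ring
  ext n
  rcases lt_or_ge 0 n with hn | hn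
  · rw [hpoly n hn, HahnSeries.coeff_add, HahnSeries.coeff_single, HahnSeries.coeff_single,
      if_neg (by omega), if_neg (by omega), add_zero]
  · rw [hexp]
    simp only [HahnSeries.coeff_add, Xmul_coeff, hX, HahnSeries.coeff_single]
    rw [hDDD n (by omega), hDD (n + 1) (by omega)]
    rcases eq_or_ne n 0 with rfl | hn0
    · have : D.coeff (0 + 1 + 1) = 0 := by
        rw [hDdef, HahnSeries.coeff_sub, hX, HahnSeries.coeff_single]
        norm_num [hc2]
      rw [this]
      norm_num
    · rcases eq_or_ne n (-1) with rfl | hn1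
      · have : D.coeff (-1 + 1 + 1) = C.coeff 1 := by
          rw [hDdef, HahnSeries.coeff_sub, hX, HahnSeries.coeff_single]
          norm_num
        rw [this]
        norm_num
        ring
      · rw [hD (n + 1 + 1) (by omega)]
        rcases eq_or_ne n (-3) with rfl | hn3
        · norm_num
        · rw [if_neg (by omega), if_neg (by omega), if_neg (by omega)]
          norm_num
end

section
/- Let C = x + ∑_{i≥1} C_{-i} x^{-i} ∈ D((x^{-1})) for a commutative Q-algebra D, and suppose (C^3)_{-k} = 0 for all k = 1, ..., m-1. Then each coefficient C_{-k} for 3 ≤ k ≤ m+1 is determined by C_{-1} and C_{-2}: there exist universal polynomials R_{k-2} ∈ Q[u,v] (independent of D and C) such that C_{-k} = -R_{k-2}(C_{-1}, C_{-2}). -/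
open Finset MvPolynomial in
noncomputable def Pa : ℕ → MvPolynomial (Fin 2) ℚ
  | 0 => 0
  | 1 => X 0
  | 2 => X 1
  | (k+3) =>
      -((∑ p ∈ (antidiagonal (k+2)).attach, Pa p.1.1 * Pa p.1.2)
        + C (1/3 : ℚ) *
          ∑ p ∈ (antidiagonal (k+1)).attach,
            (∑ q ∈ (antidiagonal p.1.1).attach, Pa q.1.1 * Pa q.1.2) * Pa p.1.2)
decreasing_by
  · have := Finset.HasAntidiagonal.antidiagonal.fst_le p.2; omega
  · have := Finset.HasAntidiagonal.antidiagonal.snd_le p.2; omega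
  · have h1 := Finset.HasAntidiagonal.antidiagonal.fst_le q.2
    have := Finset.HasAntidiagonal.antidiagonal.fst_le p.2; omega
  · have h1 := Finset.HasAntidiagonal.antidiagonal.snd_le q.2
    have := Finset.HasAntidiagonal.antidiagonal.fst_le p.2; omega
  · have := Finset.HasAntidiagonal.antidiagonal.snd_le p.2; omega

open Finset

variable {D : Type} [CommRing D] [Algebra ℚ D]

lemma ofPS_neg_coeff (f : PowerSeries D) (n : ℤ) (h : n < 0) :
    (HahnSeries.ofPowerSeries ℤ D f).coeff n = 0 := by
  rw [HahnSeries.ofPowerSeries_apply, HahnSeries.embDomain_notin_range]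
  rintro ⟨a, ha⟩
  have ha' : ((a : ℕ) : ℤ) = n := ha
  omega

lemma decomp (C : LaurentSeries D) (h1 : C.coeff (-1) = 1)
    (hneg : ∀ n : ℤ, n < -1 → C.coeff n = 0) :
    C = HahnSeries.single (-1 : ℤ) (1 : D) +
      HahnSeries.ofPowerSeries ℤ D (PowerSeries.mk fun n => C.coeff (n : ℤ)) := by
  ext n
  rw [HahnSeries.coeff_add]
  rcases lt_trichotomy n (-1) with h | h | h
  · rw [hneg n h, HahnSeries.coeff_single_of_ne (by omega), ofPS_neg_coeff _ _ (by omega),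
      add_zero]
  · subst h
    rw [h1, HahnSeries.coeff_single_same, ofPS_neg_coeff _ _ (by omega), add_zero]
  · obtain ⟨a, rfl⟩ : ∃ a : ℕ, n = (a : ℤ) := ⟨n.toNat, by omega⟩
    rw [HahnSeries.coeff_single_of_ne (by omega), zero_add,
      HahnSeries.ofPowerSeries_apply_coeff, PowerSeries.coeff_mk]

lemma cube_coeff (C : LaurentSeries D) (h1 : C.coeff (-1) = 1)
    (hneg : ∀ n : ℤ, n < -1 → C.coeff n = 0) (k : ℕ) (hk : 1 ≤ k) :
    (C ^ 3).coeff (k : ℤ) =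
      3 * C.coeff ((k : ℤ) + 2)
      + 3 * PowerSeries.coeff (k + 1)
          ((PowerSeries.mk fun n => C.coeff (n : ℤ)) * PowerSeries.mk fun n => C.coeff (n : ℤ))
      + PowerSeries.coeff k
          ((PowerSeries.mk fun n => C.coeff (n : ℤ)) * (PowerSeries.mk fun n => C.coeff (n : ℤ))
            * PowerSeries.mk fun n => C.coeff (n : ℤ)) := by
  set f : PowerSeries D := PowerSeries.mk fun n => C.coeff (n : ℤ) with hf
  set s : LaurentSeries D := HahnSeries.single (-1 : ℤ) (1 : D) with hs
  set t : LaurentSeries D := HahnSeries.ofPowerSeries ℤ D f with ht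
  have hd := decomp C h1 hneg
  have hexp : C ^ 3 = s*s*s + ((s*s)*t + (s*s)*t + (s*s)*t)
      + ((s*(t*t)) + (s*(t*t)) + (s*(t*t))) + t*t*t := by
    rw [hd]; ring
  have hsss : s*s*s = HahnSeries.single (-3 : ℤ) (1 : D) := by
    rw [hs, HahnSeries.single_mul_single, HahnSeries.single_mul_single]
    norm_num
  have hss : s*s = HahnSeries.single (-2 : ℤ) (1 : D) := by
    rw [hs, HahnSeries.single_mul_single]; norm_num
  have hsst : ((s*s)*t).coeff (k : ℤ) = PowerSeries.coeff (k + 2) f := by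
    rw [hss, show (k : ℤ) = ((k+2 : ℕ) : ℤ) + (-2) by push_cast; ring,
      HahnSeries.coeff_single_mul_add, one_mul, HahnSeries.ofPowerSeries_apply_coeff]
  have hstt : (s*(t*t)).coeff (k : ℤ) = PowerSeries.coeff (k + 1) (f * f) := by
    rw [hs, show (k : ℤ) = ((k+1 : ℕ) : ℤ) + (-1) by push_cast; ring,
      HahnSeries.coeff_single_mul_add, one_mul, ← map_mul,
      HahnSeries.ofPowerSeries_apply_coeff]
  have httt : (t*t*t).coeff (k : ℤ) = PowerSeries.coeff k (f * f * f) := by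
    rw [ht, ← map_mul, ← map_mul, HahnSeries.ofPowerSeries_apply_coeff]
  have hCk2 : PowerSeries.coeff (k + 2) f = C.coeff ((k : ℤ) + 2) := by
    rw [hf, PowerSeries.coeff_mk]; push_cast; ring_nf
  rw [hexp]
  simp only [HahnSeries.coeff_add, hsst, hstt, httt, hCk2, hsss,
    HahnSeries.coeff_single_of_ne (show (k:ℤ) ≠ -3 by omega)]
  ring

lemma key (m : ℕ) (hm : 3 < m) (C : LaurentSeries D)
    (h1 : C.coeff (-1) = 1) (h0 : C.coeff 0 = 0)
    (hneg : ∀ n : ℤ, n < -1 → C.coeff n = 0)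
    (hvan : ∀ k : ℕ, 1 ≤ k → k ≤ m - 1 → (C ^ 3).coeff (k : ℤ) = 0) :
    ∀ j : ℕ, 1 ≤ j → j ≤ m + 1 →
      C.coeff (j : ℤ) = MvPolynomial.aeval ![C.coeff 1, C.coeff 2] (Pa j) := by
  set f : PowerSeries D := PowerSeries.mk fun n => C.coeff (n : ℤ) with hf
  set v : Fin 2 → D := ![C.coeff 1, C.coeff 2] with hv
  have inv3 : ∀ a : D, (1/3:ℚ) • ((3:D) * a) = a := by
    intro a
    have h3 : (3:D) = algebraMap ℚ D 3 := by rw [map_ofNat]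
    rw [h3, ← Algebra.smul_def, smul_smul]
    norm_num
  intro j
  induction j using Nat.strong_induction_on with
  | _ j ih =>
    match j with
    | 0 => omega
    | 1 => intro _ _; simp [Pa, hv]
    | 2 => intro _ _; simp [Pa, hv]
    | (k+3) =>
      intro _ hle
      have G : ∀ i : ℕ, i ≤ k + 2 →
          PowerSeries.coeff i f = MvPolynomial.aeval v (Pa i) := by
        intro i hi
        rcases Nat.eq_zero_or_pos i with rfl | hi1
        · simp [hf, PowerSeries.coeff_mk, h0, Pa]
        · rw [hf, PowerSeries.coeff_mk]
          exact ih i (by omega) hi1 (by omega)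
      have e2 : PowerSeries.coeff (k+2) (f*f) =
          MvPolynomial.aeval v (∑ p ∈ (antidiagonal (k+2)).attach, Pa p.1.1 * Pa p.1.2) := by
        rw [map_sum, Finset.sum_attach (antidiagonal (k+2))
          (fun p => MvPolynomial.aeval v (Pa p.1 * Pa p.2)), PowerSeries.coeff_mul]
        refine Finset.sum_congr rfl fun p hp => ?_
        rw [map_mul, G p.1 (by have := Finset.HasAntidiagonal.antidiagonal.fst_le hp; omega),
          G p.2 (by have := Finset.HasAntidiagonal.antidiagonal.snd_le hp; omega)]
      have e3 : PowerSeries.coeff (k+1) (f*f*f) =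
          MvPolynomial.aeval v (∑ p ∈ (antidiagonal (k+1)).attach,
            (∑ q ∈ (antidiagonal p.1.1).attach, Pa q.1.1 * Pa q.1.2) * Pa p.1.2) := by
        rw [map_sum, Finset.sum_attach (antidiagonal (k+1))
          (fun p => MvPolynomial.aeval v
            ((∑ q ∈ (antidiagonal p.1).attach, Pa q.1.1 * Pa q.1.2) * Pa p.2)),
          PowerSeries.coeff_mul]
        refine Finset.sum_congr rfl fun p hp => ?_
        have hp1 := Finset.HasAntidiagonal.antidiagonal.fst_le hp
        have hp2 := Finset.HasAntidiagonal.antidiagonal.snd_le hp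
        have hinner : PowerSeries.coeff p.1 (f*f) =
            MvPolynomial.aeval v (∑ q ∈ (antidiagonal p.1).attach, Pa q.1.1 * Pa q.1.2) := by
          rw [map_sum, Finset.sum_attach (antidiagonal p.1)
            (fun q => MvPolynomial.aeval v (Pa q.1 * Pa q.2)), PowerSeries.coeff_mul]
          refine Finset.sum_congr rfl fun q hq => ?_
          have hq1 := Finset.HasAntidiagonal.antidiagonal.fst_le hq
          have hq2 := Finset.HasAntidiagonal.antidiagonal.snd_le hq
          rw [map_mul, G q.1 (by omega), G q.2 (by omega)]
        rw [hinner, G p.2 (by omega), ← map_mul]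
      have hrel := cube_coeff C h1 hneg (k+1) (by omega)
      rw [hvan (k+1) (by omega) (by omega)] at hrel
      have hCoeff : C.coeff (((k+3 : ℕ)) : ℤ) = C.coeff (((k+1 : ℕ) : ℤ) + 2) := by
        norm_num; ring_nf
      rw [hCoeff]
      have hstep : C.coeff (((k+1 : ℕ) : ℤ) + 2) =
          -(PowerSeries.coeff (k+2) (f*f) + (1/3:ℚ) • PowerSeries.coeff (k+1) (f*f*f)) := by
        have h3a : (3:D) * C.coeff (((k+1 : ℕ) : ℤ) + 2) =
            -((3:D) * PowerSeries.coeff (k+2) (f*f) + PowerSeries.coeff (k+1) (f*f*f)) := by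
          have : (k + 1 + 1 : ℕ) = k + 2 := by omega
          rw [this] at hrel
          linear_combination -hrel
        calc C.coeff (((k+1 : ℕ) : ℤ) + 2)
            = (1/3:ℚ) • ((3:D) * C.coeff (((k+1 : ℕ) : ℤ) + 2)) := (inv3 _).symm
          _ = -(PowerSeries.coeff (k+2) (f*f) + (1/3:ℚ) • PowerSeries.coeff (k+1) (f*f*f)) := by
              rw [h3a, smul_neg, smul_add, inv3]
      rw [hstep, e2, e3]
      show _ = MvPolynomial.aeval v (Pa (k+3))
      rw [Pa]
      rw [map_neg, map_add, map_mul, MvPolynomial.aeval_C, ← Algebra.smul_def]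



/-- let `m > 3`.  There exist universal polynomials
`R₁, …, R_{m-1} ∈ ℚ[u,v]` (independent of `D` and `C`; here `R : ℕ → _` and only
the values `R 1, …, R (m-1)` are used) such that for every commutative `ℚ`-algebra
`D` and every `C = x + ∑_{i≥1} C₋ᵢx⁻ⁱ ∈ D((x⁻¹))` with `(C³)₋ₖ = 0` for
`k = 1, …, m-1`, one has `C₋ₖ = -R_{k-2}(C₋₁, C₋₂)` for all `3 ≤ k ≤ m+1`. -/
theorem stmt17 (m : ℕ) (hm : 3 < m) :
    ∃ R : ℕ → MvPolynomial (Fin 2) ℚ,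
      ∀ (D : Type) (_ : CommRing D) (_ : Algebra ℚ D),
        ∀ C : LaurentSeries D,
          C.coeff (-1) = 1 → C.coeff 0 = 0 → (∀ n : ℤ, n < -1 → C.coeff n = 0) →
          (∀ k : ℕ, 1 ≤ k → k ≤ m - 1 → (C ^ 3).coeff (k : ℤ) = 0) →
          ∀ k : ℕ, 3 ≤ k → k ≤ m + 1 →
            C.coeff (k : ℤ) =
              - MvPolynomial.aeval ![C.coeff 1, C.coeff 2] (R (k - 2)) := by
  refine ⟨fun n => -Pa (n+2), ?_⟩
  intro D _ _ C h1 h0 hneg hvan k hk3 hkm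
  have hco := key m hm C h1 h0 hneg hvan k (by omega) hkm
  rw [hco]
  show _ = -(MvPolynomial.aeval ![C.coeff 1, C.coeff 2]) (-Pa (k - 2 + 2))
  rw [show k - 2 + 2 = k from by omega, map_neg, neg_neg]
end

section
/- Let E_k = (C^3)_{-k} ∈ Q[C_{-1},...,C_{-(m+1)}] for k = 1,...,m-1, and order monomials by the weighted degree reverse lexicographic order with weights w(C_{-i}) = i+1 (largest variable C_{-(m+1)}). Then the leading term of E_k is 3C_{-(k+2)}, and since these leading terms are pairwise coprime, {E_1, ..., E_{m-1}} is a Groebner basis of the ideal it generates. -/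
/-- The weight of a monomial `∏ C₋ᵢ^{aᵢ}` for the weights `w(C₋ᵢ) = i + 1`. -/
def wdeg (d : ℕ →₀ ℕ) : ℕ := d.sum fun i a => a * (i + 1)

/-- The weighted degree reverse lexicographic order (weights `w(C₋ᵢ) = i + 1`,
variables ordered `C₋₁ < C₋₂ < ⋯`): `d` is smaller than `e` iff `d` has smaller
weight, or the weights agree and at the smallest variable where the exponents
differ, `d` has the *larger* exponent. -/
def wdrlLt (d e : ℕ →₀ ℕ) : Prop :=
  wdeg d < wdeg e ∨ (wdeg d = wdeg e ∧ ∃ i, e i < d i ∧ ∀ j < i, d j = e j)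

/-- `d` is the leading monomial of `p` for the order `wdrlLt`. -/
def IsLeadingMonomial (p : MvPolynomial ℕ ℚ) (d : ℕ →₀ ℕ) : Prop :=
  d ∈ p.support ∧ ∀ e ∈ p.support, e ≠ d → wdrlLt e d



open MvPolynomial

lemma wdeg_zero : wdeg 0 = 0 := Finsupp.sum_zero_index

lemma wdeg_single (i a : ℕ) : wdeg (Finsupp.single i a) = a * (i + 1) := by
  simp [wdeg, Finsupp.sum_single_index]

lemma wdeg_add (d e : ℕ →₀ ℕ) : wdeg (d + e) = wdeg d + wdeg e :=
  Finsupp.sum_add_index' (fun i => by simp) (fun i a b => add_mul a b (i+1))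

lemma wdeg_sum {α : Type*} (s : Finset α) (f : α → (ℕ →₀ ℕ)) :
    wdeg (∑ i ∈ s, f i) = ∑ i ∈ s, wdeg (f i) := by
  classical
  induction s using Finset.induction with
  | empty => simp [wdeg_zero]
  | insert _ _ h ih => simp [Finset.sum_insert h, wdeg_add, ih]

lemma wdeg_pos {d : ℕ →₀ ℕ} {j : ℕ} (hj : j ∈ d.support) : 0 < wdeg d := by
  have h1 : d j * (j + 1) ≤ wdeg d :=
    Finset.single_le_sum (f := fun i => d i * (i + 1)) (fun i _ => Nat.zero_le _) hj
  have h2 : 0 < d j := Nat.pos_of_ne_zero (Finsupp.mem_support_iff.mp hj)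
  exact lt_of_lt_of_le (by positivity) h1

lemma wdeg_ne_zero {d : ℕ →₀ ℕ} (h : wdeg d ≠ 0) : d ≠ 0 := by
  rintro rfl; exact h wdeg_zero

lemma wdeg_lt_of_le {d e : ℕ →₀ ℕ} (h : ∀ j, d j ≤ e j) {j0 : ℕ} (hj0 : d j0 < e j0) :
    wdeg d < wdeg e := by
  have hle : d ≤ e := fun j => h j
  have : e = d + (e - d) := (add_tsub_cancel_of_le hle).symm
  rw [this, wdeg_add]
  have : (e - d) j0 ≠ 0 := by
    have : (e - d) j0 = e j0 - d j0 := Finsupp.tsub_apply e d j0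
    omega
  have := wdeg_pos (Finsupp.mem_support_iff.mpr this)
  omega

open MvPolynomial

noncomputable def Pser : PowerSeries (MvPolynomial ℕ ℚ) :=
  PowerSeries.mk fun i => if i = 0 then 0 else MvPolynomial.X i

lemma supp_P1 (N : ℕ) : ∀ e ∈ (PowerSeries.coeff N Pser).support,
    (∀ j ∈ e.support, 1 ≤ j ∧ j ≤ N) ∧ wdeg e = N + 1 ∧ e ≠ 0 := by
  intro e he
  rw [Pser, PowerSeries.coeff_mk] at he
  by_cases hN : N = 0
  · simp [hN] at he
  · rw [if_neg hN, MvPolynomial.support_X (R := ℚ)] at he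
    rw [Finset.mem_singleton] at he
    subst he
    refine ⟨fun j hj => ?_, by simp [wdeg_single], ?_⟩
    · rw [Finsupp.support_single_ne_zero _ one_ne_zero, Finset.mem_singleton] at hj
      omega
    · simp [Finsupp.single_eq_zero]

lemma supp_mul_aux {p q : MvPolynomial ℕ ℚ} {e : ℕ →₀ ℕ} (he : e ∈ (p * q).support) :
    ∃ a ∈ p.support, ∃ b ∈ q.support, a + b = e := by
  classical
  have := MvPolynomial.support_mul p q he
  rwa [Finset.mem_add] at this

lemma supp_P2 (N : ℕ) : ∀ e ∈ (PowerSeries.coeff N (Pser ^ 2)).support,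
    (∀ j ∈ e.support, 1 ≤ j ∧ j + 1 ≤ N) ∧ wdeg e = N + 2 ∧ e ≠ 0 := by
  classical
  intro e he
  rw [pow_two, PowerSeries.coeff_mul] at he
  have := MvPolynomial.support_sum he
  rw [Finset.mem_biUnion] at this
  obtain ⟨x, hx, hex⟩ := this
  rw [Finset.HasAntidiagonal.mem_antidiagonal] at hx
  obtain ⟨a, ha, b, hb, hab⟩ := supp_mul_aux hex
  obtain ⟨ha1, ha2, ha3⟩ := supp_P1 _ _ ha
  obtain ⟨hb1, hb2, hb3⟩ := supp_P1 _ _ hb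
  subst hab
  obtain ⟨ja, hja⟩ := Finsupp.support_nonempty_iff.mpr ha3
  obtain ⟨jb, hjb⟩ := Finsupp.support_nonempty_iff.mpr hb3
  have hx1 : 1 ≤ x.1 := le_trans (ha1 ja hja).1 (ha1 ja hja).2
  have hx2 : 1 ≤ x.2 := le_trans (hb1 jb hjb).1 (hb1 jb hjb).2
  refine ⟨fun j hj => ?_, ?_, ?_⟩
  · have := Finsupp.support_add hj
    rw [Finset.mem_union] at this
    rcases this with h | h
    · exact ⟨(ha1 j h).1, by have := (ha1 j h).2; omega⟩
    · exact ⟨(hb1 j h).1, by have := (hb1 j h).2; omega⟩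
  · rw [wdeg_add, ha2, hb2]; omega
  · intro h
    have := congrArg wdeg h
    rw [wdeg_add, ha2, hb2, wdeg_zero] at this
    omega

lemma supp_P3 (N : ℕ) : ∀ e ∈ (PowerSeries.coeff N (Pser ^ 3)).support,
    (∀ j ∈ e.support, 1 ≤ j ∧ j + 2 ≤ N) ∧ wdeg e = N + 3 ∧ e ≠ 0 := by
  classical
  intro e he
  rw [pow_succ, mul_comm, PowerSeries.coeff_mul] at he
  have := MvPolynomial.support_sum he
  rw [Finset.mem_biUnion] at this
  obtain ⟨x, hx, hex⟩ := this
  rw [Finset.HasAntidiagonal.mem_antidiagonal] at hx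
  obtain ⟨a, ha, b, hb, hab⟩ := supp_mul_aux hex
  obtain ⟨ha1, ha2, ha3⟩ := supp_P1 _ _ ha
  obtain ⟨hb1, hb2, hb3⟩ := supp_P2 _ _ hb
  subst hab
  obtain ⟨ja, hja⟩ := Finsupp.support_nonempty_iff.mpr ha3
  obtain ⟨jb, hjb⟩ := Finsupp.support_nonempty_iff.mpr hb3
  have hx1 : 1 ≤ x.1 := le_trans (ha1 ja hja).1 (ha1 ja hja).2
  have hx2 : 2 ≤ x.2 := by have := (hb1 jb hjb).1; have := (hb1 jb hjb).2; omega
  refine ⟨fun j hj => ?_, ?_, ?_⟩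
  · have := Finsupp.support_add hj
    rw [Finset.mem_union] at this
    rcases this with h | h
    · exact ⟨(ha1 j h).1, by have := (ha1 j h).2; omega⟩
    · exact ⟨(hb1 j h).1, by have := (hb1 j h).2; omega⟩
  · rw [wdeg_add, ha2, hb2]; omega
  · intro h
    have := congrArg wdeg h
    rw [wdeg_add, ha2, hb2, wdeg_zero] at this
    omega

noncomputable def Ek (k : ℕ) : MvPolynomial ℕ ℚ := (genC ^ 3).coeff (k : ℤ)

section HahnPart
open HahnSeries

lemma single_mul_ofPS_coeff (a : ℕ) (b : ℤ) (φ : PowerSeries (MvPolynomial ℕ ℚ)) (n : ℕ)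
    (h : (n : ℤ) = (a : ℤ) + b) :
    (single b (1 : MvPolynomial ℕ ℚ) * ofPowerSeries ℤ _ φ).coeff (n : ℤ)
      = PowerSeries.coeff a φ := by
  rw [h, coeff_single_mul_add, one_mul, ofPowerSeries_apply_coeff]

lemma Ek_eq (k : ℕ) :
    Ek k = PowerSeries.coeff (k+2) Pser + PowerSeries.coeff (k+2) Pser
      + PowerSeries.coeff (k+2) Pser
      + (PowerSeries.coeff (k+1) (Pser^2) + PowerSeries.coeff (k+1) (Pser^2)
        + PowerSeries.coeff (k+1) (Pser^2))
      + PowerSeries.coeff k (Pser^3) := by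
  have key : ∀ A B : LaurentSeries (MvPolynomial ℕ ℚ),
      (A+B)^3 = A*A*A + (A*A*B + A*A*B + A*A*B) + (A*(B*B) + A*(B*B) + A*(B*B)) + B*B*B := by
    intros A B; ring
  have hexp : genC ^ 3 = single (-3 : ℤ) 1
      + (single (-2 : ℤ) 1 * ofPowerSeries ℤ _ Pser + single (-2 : ℤ) 1 * ofPowerSeries ℤ _ Pser
        + single (-2 : ℤ) 1 * ofPowerSeries ℤ _ Pser)
      + (single (-1 : ℤ) 1 * ofPowerSeries ℤ _ (Pser^2)
        + single (-1 : ℤ) 1 * ofPowerSeries ℤ _ (Pser^2)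
        + single (-1 : ℤ) 1 * ofPowerSeries ℤ _ (Pser^2))
      + ofPowerSeries ℤ _ (Pser^3) := by
    rw [genC,
      show (PowerSeries.mk fun i => if i = 0 then 0 else MvPolynomial.X i :
        PowerSeries (MvPolynomial ℕ ℚ)) = Pser from rfl, key]
    have hAA : (single (-1 : ℤ) (1 : MvPolynomial ℕ ℚ)) * single (-1 : ℤ) 1 = single (-2 : ℤ) 1 := by
      rw [single_mul_single]; norm_num
    have hAAA : (single (-2 : ℤ) (1 : MvPolynomial ℕ ℚ)) * single (-1 : ℤ) 1 = single (-3 : ℤ) 1 := by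
      rw [single_mul_single]; norm_num
    rw [hAA, hAAA, ← map_mul, ← map_mul, ← pow_two, ← pow_succ]
  rw [Ek, hexp]
  simp only [HahnSeries.coeff_add]
  have c3 : (single (-3 : ℤ) (1 : MvPolynomial ℕ ℚ)).coeff (k : ℤ) = 0 := by
    rw [HahnSeries.coeff_single_of_ne (by omega)]
  have c2 : (single (-2 : ℤ) (1 : MvPolynomial ℕ ℚ) * ofPowerSeries ℤ _ Pser).coeff (k : ℤ)
      = PowerSeries.coeff (k+2) Pser := single_mul_ofPS_coeff (k+2) (-2) Pser k (by push_cast; ring)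
  have c1 : (single (-1 : ℤ) (1 : MvPolynomial ℕ ℚ) * ofPowerSeries ℤ _ (Pser^2)).coeff (k : ℤ)
      = PowerSeries.coeff (k+1) (Pser^2) :=
    single_mul_ofPS_coeff (k+1) (-1) (Pser^2) k (by push_cast; ring)
  have c0 : (ofPowerSeries ℤ (MvPolynomial ℕ ℚ) (Pser^3)).coeff (k : ℤ)
      = PowerSeries.coeff k (Pser^3) := ofPowerSeries_apply_coeff _ _
  rw [c3, c2, c1, c0, zero_add]

end HahnPart

lemma supp_add_cases {f g : MvPolynomial ℕ ℚ} {e : ℕ →₀ ℕ}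
    (h : e ∈ (f + g).support) : e ∈ f.support ∨ e ∈ g.support := by
  classical
  have := MvPolynomial.support_add h
  rwa [Finset.mem_union] at this

def Good (k : ℕ) (e : ℕ →₀ ℕ) : Prop :=
  e ≠ 0 ∧ (∀ j ∈ e.support, 1 ≤ j ∧ j ≤ k) ∧ wdeg e = k + 3

lemma coeff_P1 (k : ℕ) : PowerSeries.coeff (k+2) Pser = X (k+2) := by
  rw [Pser, PowerSeries.coeff_mk, if_neg (by omega)]

lemma Ek_supp {k : ℕ} (hk : 1 ≤ k) :
    ∀ e ∈ (Ek k).support, e = Finsupp.single (k+2) 1 ∨ Good k e := by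
  intro e he
  rw [Ek_eq, coeff_P1] at he
  rcases supp_add_cases he with h | h
  swap
  · right
    obtain ⟨hs, hw, hne⟩ := supp_P3 _ _ h
    exact ⟨hne, fun j hj => ⟨(hs j hj).1, by have := (hs j hj).2; omega⟩, by omega⟩
  rcases supp_add_cases h with h | h
  swap
  · right
    have hq : e ∈ (PowerSeries.coeff (k+1) (Pser^2)).support := by
      rcases supp_add_cases h with h | h
      · rcases supp_add_cases h with h | h <;> exact h
      · exact h
    obtain ⟨hs, hw, hne⟩ := supp_P2 _ _ hq
    exact ⟨hne, fun j hj => ⟨(hs j hj).1, by have := (hs j hj).2; omega⟩, by omega⟩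
  · left
    have hX : e ∈ (X (k+2) : MvPolynomial ℕ ℚ).support := by
      rcases supp_add_cases h with h | h
      · rcases supp_add_cases h with h | h <;> exact h
      · exact h
    rwa [support_X, Finset.mem_singleton] at hX

lemma coeff_notmem {p : MvPolynomial ℕ ℚ} {d : ℕ →₀ ℕ} (h : d ∉ p.support) : coeff d p = 0 :=
  by rwa [mem_support_iff, not_not] at h

lemma Ek_coeff_single (k : ℕ) : (Ek k).coeff (Finsupp.single (k+2) 1) = 3 := by
  rw [Ek_eq, coeff_P1]
  simp only [coeff_add]
  have hX : coeff (Finsupp.single (k+2) 1) (X (k+2) : MvPolynomial ℕ ℚ) = 1 := MvPolynomial.coeff_X_same _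
  have hq2 : coeff (Finsupp.single (k+2) 1) (PowerSeries.coeff (k+1) (Pser^2)) = 0 := by
    apply coeff_notmem
    intro h
    have := (supp_P2 _ _ h).1 (k+2) (by
      rw [Finsupp.support_single_ne_zero _ one_ne_zero]; simp)
    omega
  have hq3 : coeff (Finsupp.single (k+2) 1) (PowerSeries.coeff k (Pser^3)) = 0 := by
    apply coeff_notmem
    intro h
    have := (supp_P3 _ _ h).1 (k+2) (by
      rw [Finsupp.support_single_ne_zero _ one_ne_zero]; simp)
    omega
  rw [hX, hq2, hq3]; norm_num

noncomputable def Fk (k : ℕ) : MvPolynomial ℕ ℚ := Ek k - C 3 * X (k+2)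

lemma Ek_eq_Fk (k : ℕ) : Ek k = C 3 * X (k+2) + Fk k := by rw [Fk]; ring

lemma Fk_supp {k : ℕ} (hk : 1 ≤ k) : ∀ e ∈ (Fk k).support, Good k e := by
  classical
  intro e he
  rw [mem_support_iff] at he
  have hco : coeff e (Fk k) = coeff e (Ek k) - 3 * coeff e (X (k+2)) := by
    rw [Fk, coeff_sub, coeff_C_mul]
  rw [coeff_X'] at hco
  by_cases hes : e = Finsupp.single (k+2) 1
  · rw [if_pos hes.symm] at hco
    rw [hes] at hco he
    rw [Ek_coeff_single] at hco
    norm_num at hco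
    exact absurd hco he
  · rw [if_neg (fun h => hes h.symm)] at hco
    have hmem : e ∈ (Ek k).support := by
      rw [mem_support_iff]; intro h; rw [h] at hco; norm_num at hco; exact he (by rw [hco])
    rcases Ek_supp hk e hmem with h | h
    · exact absurd h hes
    · exact h

noncomputable def gsub (m : ℕ) (j : ℕ) : MvPolynomial ℕ ℚ :=
  if 3 ≤ j ∧ j ≤ m + 1 then
    (-(3:ℚ)⁻¹) • MvPolynomial.aeval
      (fun i => if _h : i < j then gsub m i else MvPolynomial.X i) (Fk (j - 2))
  else MvPolynomial.X j
termination_by j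
decreasing_by exact _h

lemma gsub_eq_of_not {m j : ℕ} (h : ¬(3 ≤ j ∧ j ≤ m + 1)) : gsub m j = X j := by
  rw [gsub, if_neg h]

lemma gsub_eq_of_mem {m j : ℕ} (h : 3 ≤ j ∧ j ≤ m + 1) : gsub m j =
    (-(3:ℚ)⁻¹) • MvPolynomial.aeval
      (fun i => if _h : i < j then gsub m i else MvPolynomial.X i) (Fk (j - 2)) := by
  rw [gsub, if_pos h]

def H12 (w : ℕ) (p : MvPolynomial ℕ ℚ) : Prop :=
  ∀ e ∈ p.support, (∀ i ∈ e.support, i = 1 ∨ i = 2) ∧ wdeg e = w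

lemma H12_C (a : ℚ) : H12 0 (C a : MvPolynomial ℕ ℚ) := by
  classical
  intro e he
  rw [C_apply, support_monomial] at he
  by_cases h0 : a = 0
  · rw [if_pos h0] at he; exact absurd he (Finset.notMem_empty e)
  · rw [if_neg h0, Finset.mem_singleton] at he
    subst he
    simp [wdeg_zero]

lemma H12_mul {v w : ℕ} {p q : MvPolynomial ℕ ℚ} (hp : H12 v p) (hq : H12 w q) :
    H12 (v + w) (p * q) := by
  classical
  intro e he
  obtain ⟨a, ha, b, hb, hab⟩ := Finset.mem_add.mp (MvPolynomial.support_mul p q he)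
  obtain ⟨ha1, ha2⟩ := hp a ha
  obtain ⟨hb1, hb2⟩ := hq b hb
  subst hab
  constructor
  · intro i hi
    rcases Finset.mem_union.mp (Finsupp.support_add hi) with h | h
    · exact ha1 i h
    · exact hb1 i h
  · rw [wdeg_add, ha2, hb2]

lemma H12_pow {w : ℕ} {p : MvPolynomial ℕ ℚ} (hp : H12 w p) (n : ℕ) : H12 (n * w) (p ^ n) := by
  induction n with
  | zero => simpa using H12_C 1
  | succ n ih =>
      rw [pow_succ, Nat.succ_mul]
      exact H12_mul ih hp

lemma H12_smul {w : ℕ} {c : ℚ} {p : MvPolynomial ℕ ℚ} (hp : H12 w p) : H12 w (c • p) := by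
  intro e he
  exact hp e (Finsupp.support_smul he)

lemma H12_prod {s : Finset ℕ} {f : ℕ → MvPolynomial ℕ ℚ} {wf : ℕ → ℕ}
    (h : ∀ i ∈ s, H12 (wf i) (f i)) : H12 (∑ i ∈ s, wf i) (∏ i ∈ s, f i) := by
  classical
  induction s using Finset.induction with
  | empty => simpa using H12_C 1
  | @insert a s ha ih =>
      rw [Finset.sum_insert ha, Finset.prod_insert ha]
      exact H12_mul (h a (Finset.mem_insert_self a s))
        (ih fun i hi => h i (Finset.mem_insert_of_mem hi))

lemma H12_aeval {w : ℕ} {g : ℕ → MvPolynomial ℕ ℚ} {p : MvPolynomial ℕ ℚ}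
    (hp : ∀ d ∈ p.support, wdeg d = w)
    (hg : ∀ d ∈ p.support, ∀ i ∈ d.support, H12 (i + 1) (g i)) :
    H12 w (aeval g p) := by
  classical
  intro e he
  rw [p.as_sum, map_sum] at he
  have := MvPolynomial.support_sum he
  rw [Finset.mem_biUnion] at this
  obtain ⟨d, hd, hed⟩ := this
  rw [aeval_monomial] at hed
  have hprod : H12 (∑ i ∈ d.support, d i * (i + 1)) (∏ i ∈ d.support, g i ^ d i) :=
    H12_prod fun i hi => H12_pow (hg d hd i hi) (d i)
  have : H12 (0 + wdeg d) ((algebraMap ℚ (MvPolynomial ℕ ℚ)) (coeff d p) *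
      ∏ i ∈ d.support, g i ^ d i) := by
    apply H12_mul (H12_C _) _
    exact hprod
  rw [zero_add, hp d hd] at this
  exact this e hed

lemma gsub_H12 {m : ℕ} : ∀ j : ℕ, 3 ≤ j → j ≤ m + 1 → H12 (j + 1) (gsub m j) := by
  intro j
  induction j using Nat.strong_induction_on with
  | _ j ih =>
    intro h3 hm1
    rw [gsub_eq_of_mem ⟨h3, hm1⟩]
    apply H12_smul
    have hk1 : 1 ≤ j - 2 := by omega
    apply H12_aeval
    · intro d hd
      have := (Fk_supp hk1 d hd).2.2
      omega
    · intro d hd i hi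
      have hik := ((Fk_supp hk1 d hd).2.1 i hi)
      rw [dif_pos (by omega : i < j)]
      by_cases h3i : 3 ≤ i
      · exact ih i (by omega) h3i (by omega)
      · rw [gsub_eq_of_not (by omega)]
        intro e he
        rw [support_X, Finset.mem_singleton] at he
        subst he
        refine ⟨fun l hl => ?_, by rw [wdeg_single]; ring⟩
        · rw [Finsupp.support_single_ne_zero _ one_ne_zero, Finset.mem_singleton] at hl
          omega

lemma aeval_gsub_Fk {m k : ℕ} (hk1 : 1 ≤ k) (hk2 : k + 2 ≤ m + 1) :
    aeval (fun i => if _h : i < k + 2 then gsub m i else X i) (Fk k)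
      = aeval (gsub m) (Fk k) := by
  rw [aeval_def, aeval_def, ← coe_eval₂Hom, ← coe_eval₂Hom]
  apply eval₂Hom_congr' rfl _ rfl
  intro i hiv _
  obtain ⟨d, hd, hid⟩ := (mem_vars i).mp hiv
  have := (Fk_supp hk1 d hd).2.1 i hid
  rw [dif_pos (by omega)]

lemma aeval_gsub_Ek {m k : ℕ} (hk1 : 1 ≤ k) (hk2 : k ≤ m - 1) (hm : 3 < m) :
    aeval (gsub m) (Ek k) = 0 := by
  have hk2' : k + 2 ≤ m + 1 := by omega
  rw [Ek_eq_Fk, map_add, map_mul, aeval_X, aeval_C]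
  rw [gsub_eq_of_mem ⟨by omega, hk2'⟩]
  rw [show k + 2 - 2 = k from rfl, aeval_gsub_Fk hk1 hk2']
  set A := aeval (gsub m) (Fk k)
  rw [Algebra.smul_def, algebraMap_eq, ← mul_assoc, ← C_mul]
  norm_num

lemma wdrlLt_asymm {a b : ℕ →₀ ℕ} (h1 : wdrlLt a b) (h2 : wdrlLt b a) : False := by
  rcases h1 with h1 | ⟨hw1, i, hi, hji⟩
  · rcases h2 with h2 | ⟨hw2, _⟩ <;> omega
  · rcases h2 with h2 | ⟨hw2, i', hi', hji'⟩
    · omega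
    · rcases lt_trichotomy i i' with h | h | h
      · have := hji' i h; omega
      · subst h; omega
      · have := hji i' h; omega

def Std (m : ℕ) (d : ℕ →₀ ℕ) : Prop := ∀ j, 3 ≤ j → j ≤ m + 1 → d j = 0

lemma sigma_monomial_std {m : ℕ} {d : ℕ →₀ ℕ} (a : ℚ) (hd : Std m d) :
    aeval (gsub m) (monomial d a) = monomial d a := by
  rw [aeval_monomial, monomial_eq, algebraMap_eq]
  congr 1
  apply Finsupp.prod_congr
  intro i hi
  have : ¬(3 ≤ i ∧ i ≤ m + 1) := by
    intro ⟨h1, h2⟩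
    exact Finsupp.mem_support_iff.mp hi (hd i h1 h2)
  rw [gsub_eq_of_not this]

lemma support_prod_exists {s : Finset ℕ} {p : ℕ → MvPolynomial ℕ ℚ} :
    ∀ e ∈ (∏ i ∈ s, p i).support, ∃ f : ℕ → (ℕ →₀ ℕ),
      (∀ i ∈ s, f i ∈ (p i).support) ∧ e = ∑ i ∈ s, f i := by
  classical
  induction s using Finset.induction with
  | empty =>
      intro e he
      rw [Finset.prod_empty] at he
      refine ⟨fun _ => 0, by simp, ?_⟩
      rw [Finset.sum_empty]
      have : e ∈ (C (1:ℚ) : MvPolynomial ℕ ℚ).support := by rwa [C_1]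
      rw [C_apply, support_monomial, if_neg one_ne_zero, Finset.mem_singleton] at this
      exact this
  | @insert a s ha ih =>
      intro e he
      rw [Finset.prod_insert ha] at he
      obtain ⟨x, hx, y, hy, hxy⟩ := Finset.mem_add.mp (MvPolynomial.support_mul _ _ he)
      obtain ⟨f, hf, hyf⟩ := ih y hy
      refine ⟨Function.update f a x, ?_, ?_⟩
      · intro i hi
        rcases Finset.mem_insert.mp hi with rfl | hi
        · rwa [Function.update_self]
        · rw [Function.update_of_ne (ne_of_mem_of_not_mem hi ha)]
          exact hf i hi
      · rw [Finset.sum_insert ha, Function.update_self]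
        rw [← hxy, hyf]
        congr 1
        apply Finset.sum_congr rfl
        intro i hi
        rw [Function.update_of_ne (ne_of_mem_of_not_mem hi ha)]


lemma sigma_monomial_lt {m : ℕ} (d : ℕ →₀ ℕ) (a : ℚ) (hd : ¬ Std m d) :
    ∀ e ∈ (aeval (gsub m) (monomial d a)).support, wdrlLt e d := by
  classical
  intro e he
  rw [aeval_monomial] at he
  obtain ⟨x, hx, y, hy, hxy⟩ := Finset.mem_add.mp (MvPolynomial.support_mul _ _ he)
  have hx0 : x = 0 := by
    rw [algebraMap_eq, C_apply, support_monomial] at hx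
    by_cases h0 : a = 0
    · rw [if_pos h0] at hx; exact absurd hx (Finset.notMem_empty x)
    · rwa [if_neg h0, Finset.mem_singleton] at hx
  obtain ⟨f, hf, hyf⟩ := support_prod_exists (s := d.support)
    (p := fun i => gsub m i ^ d i) y hy
  have hey : e = ∑ i ∈ d.support, f i := by rw [← hyf, ← hxy, hx0, zero_add]
  -- structure of f i
  have hfe : ∀ i ∈ d.support, ¬(3 ≤ i ∧ i ≤ m + 1) → f i = Finsupp.single i (d i) := by
    intro i hi h
    have := hf i hi
    rw [gsub_eq_of_not h, support_X_pow, Finset.mem_singleton] at this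
    exact this
  have hfh : ∀ i ∈ d.support, (3 ≤ i ∧ i ≤ m + 1) →
      (∀ l ∈ (f i).support, l = 1 ∨ l = 2) ∧ wdeg (f i) = d i * (i + 1) := by
    intro i hi h
    exact H12_pow (gsub_H12 i h.1 h.2) (d i) (f i) (hf i hi)
  -- term values
  have hterm0 : ∀ j, ∀ i ∈ d.support, i ≠ j → ¬(j = 1 ∨ j = 2) → f i j = 0 := by
    intro j i hi hij hj12
    by_cases h : 3 ≤ i ∧ i ≤ m + 1
    · by_contra hne
      have := (hfh i hi h).1 j (Finsupp.mem_support_iff.mpr hne)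
      tauto
    · rw [hfe i hi h, Finsupp.single_apply, if_neg hij]
  have happ : ∀ j, e j = ∑ i ∈ d.support, f i j := by
    intro j; rw [hey]; exact Finsupp.finset_sum_apply _ _ _
  -- (1) agreement outside {1,2} and elim range
  have hagree : ∀ j, ¬(j = 1 ∨ j = 2) → ¬(3 ≤ j ∧ j ≤ m + 1) → e j = d j := by
    intro j hj12 hjel
    rw [happ j]
    by_cases hjs : j ∈ d.support
    · rw [Finset.sum_eq_single j (fun i hi hij => hterm0 j i hi hij hj12)
        (fun h => absurd hjs h)]
      rw [hfe j hjs hjel, Finsupp.single_apply, if_pos rfl]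
    · rw [Finset.sum_eq_zero, eq_comm]
      · exact Finsupp.notMem_support_iff.mp hjs
      · intro i hi
        exact hterm0 j i hi (fun h => hjs (h ▸ hi)) hj12
  -- (2) zero on elim range
  have hzero : ∀ j, 3 ≤ j → j ≤ m + 1 → e j = 0 := by
    intro j h3 hm1
    rw [happ j]
    apply Finset.sum_eq_zero
    intro i hi
    by_cases h : 3 ≤ i ∧ i ≤ m + 1
    · by_contra hne
      have := (hfh i hi h).1 j (Finsupp.mem_support_iff.mpr hne)
      omega
    · rw [hfe i hi h, Finsupp.single_apply]
      rw [if_neg (by omega)]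
  -- (3) e 1 ≥ d 1, e 2 ≥ d 2
  have hge : ∀ j, j = 1 ∨ j = 2 → d j ≤ e j := by
    intro j hj
    by_cases hjs : j ∈ d.support
    · rw [happ j]
      have : f j j = d j := by
        rw [hfe j hjs (by omega), Finsupp.single_apply, if_pos rfl]
      rw [← this]
      exact Finset.single_le_sum (f := fun i => f i j) (fun i _ => Nat.zero_le _) hjs
    · rw [Finsupp.notMem_support_iff.mp hjs]; exact Nat.zero_le _
  -- (4) weights
  have hw : wdeg e = wdeg d := by
    rw [hey, wdeg_sum]
    have : ∀ i ∈ d.support, wdeg (f i) = d i * (i + 1) := by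
      intro i hi
      by_cases h : 3 ≤ i ∧ i ≤ m + 1
      · exact (hfh i hi h).2
      · rw [hfe i hi h, wdeg_single]
    rw [Finset.sum_congr rfl this]
    rfl
  -- conclusion
  right
  refine ⟨hw, ?_⟩
  by_cases h1 : d 1 < e 1
  · exact ⟨1, h1, fun j hj => by
      interval_cases j
      exact hagree 0 (by omega) (by omega)⟩
  · have he1 : e 1 = d 1 := le_antisymm (by omega) (hge 1 (Or.inl rfl))
    have h2 : d 2 < e 2 := by
      by_contra h2
      have hle : ∀ j, e j ≤ d j := by
        intro j
        by_cases hj12 : j = 1 ∨ j = 2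
        · rcases hj12 with rfl | rfl
          · omega
          · have := hge 2 (Or.inr rfl); omega
        · by_cases hjel : 3 ≤ j ∧ j ≤ m + 1
          · rw [hzero j hjel.1 hjel.2]; exact Nat.zero_le _
          · rw [hagree j hj12 hjel]
      rw [Std] at hd
      push_neg at hd
      obtain ⟨j0, h3, hm1, hdj0⟩ := hd
      have hj0 : e j0 < d j0 := by
        rw [hzero j0 h3 hm1]; omega
      have := wdeg_lt_of_le hle hj0
      omega
    exact ⟨2, h2, fun j hj => by
      interval_cases j
      · exact hagree 0 (by omega) (by omega)
      · omega⟩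

/-- for the weighted degree reverse lexicographic order with weights
`w(C₋ᵢ) = i + 1`, the leading term of `Eₖ = (C³)₋ₖ` is `3·C₋₍ₖ₊₂₎`
(leading monomial `C₋₍ₖ₊₂₎` with coefficient `3`), and `{E₁, …, E_{m-1}}` is a
Groebner basis of the ideal it generates: the leading monomial of every nonzero
element of the ideal is divisible by some `C₋₍ₖ₊₂₎`, `1 ≤ k ≤ m - 1`. -/
theorem stmt19 (m : ℕ) (hm : 3 < m) :
    (∀ k : ℕ, 1 ≤ k → k ≤ m - 1 →
      IsLeadingMonomial ((genC ^ 3).coeff (k : ℤ)) (Finsupp.single (k + 2) 1) ∧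
      ((genC ^ 3).coeff (k : ℤ)).coeff (Finsupp.single (k + 2) 1) = 3) ∧
    (∀ p ∈ Ideal.span {q : MvPolynomial ℕ ℚ |
          ∃ k : ℕ, 1 ≤ k ∧ k ≤ m - 1 ∧ q = (genC ^ 3).coeff (k : ℤ)},
      p ≠ 0 → ∀ d, IsLeadingMonomial p d →
        ∃ k : ℕ, 1 ≤ k ∧ k ≤ m - 1 ∧ Finsupp.single (k + 2) 1 ≤ d) := by
  constructor
  · intro k hk1 hk2
    constructor
    · constructor
      · show Finsupp.single (k+2) 1 ∈ (Ek k).support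
        rw [MvPolynomial.mem_support_iff, Ek_coeff_single]
        norm_num
      · intro e he hne
        rcases Ek_supp hk1 e he with h | ⟨h0, hsub, hw⟩
        · exact absurd h hne
        · right
          constructor
          · rw [hw, wdeg_single]; ring
          · have hsn : e.support.Nonempty := Finsupp.support_nonempty_iff.mpr h0
            set i := e.support.min' hsn with hidef
            have him : i ∈ e.support := e.support.min'_mem hsn
            have hik : i ≤ k := (hsub i him).2
            refine ⟨i, ?_, ?_⟩
            · rw [Finsupp.single_apply, if_neg (by omega)]
              exact Nat.pos_of_ne_zero (Finsupp.mem_support_iff.mp him)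
            · intro j hj
              have hjn : j ∉ e.support := fun hjs => absurd (e.support.min'_le j hjs) (by omega)
              rw [Finsupp.notMem_support_iff.mp hjn, Finsupp.single_apply,
                if_neg (by omega)]
    · exact Ek_coeff_single k
  · intro p hp hp0 d hLM
    by_contra hcon
    push_neg at hcon
    have hstd : Std m d := by
      intro j h3 hm1
      have h := hcon (j - 2) (by omega) (by omega)
      rw [show j - 2 + 2 = j by omega, Finsupp.single_le_iff] at h
      omega
    have hker : aeval (gsub m) p = 0 := by
      have hle : Ideal.span {q : MvPolynomial ℕ ℚ |
          ∃ k : ℕ, 1 ≤ k ∧ k ≤ m - 1 ∧ q = (genC ^ 3).coeff (k : ℤ)} ≤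
          RingHom.ker (aeval (gsub m) : MvPolynomial ℕ ℚ →ₐ[ℚ] MvPolynomial ℕ ℚ).toRingHom := by
        rw [Ideal.span_le]
        rintro q ⟨k, hk1, hk2, rfl⟩
        exact aeval_gsub_Ek hk1 hk2 hm
      exact hle hp
    have hcoeff : coeff d (aeval (gsub m) p) = coeff d p := by
      conv_lhs => rw [← support_sum_monomial_coeff p]
      rw [map_sum, coeff_sum]
      rw [Finset.sum_eq_single d]
      · rw [sigma_monomial_std _ hstd, coeff_monomial, if_pos rfl]
      · intro c hc hcd
        by_cases hcs : Std m c
        · rw [sigma_monomial_std _ hcs, coeff_monomial, if_neg (fun h => hcd h)]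
        · by_contra hne
          have hdm : d ∈ (aeval (gsub m) (monomial c (coeff c p))).support :=
            MvPolynomial.mem_support_iff.mpr hne
          exact wdrlLt_asymm (sigma_monomial_lt c _ hcs d hdm) (hLM.2 c hc hcd)
      · intro hds
        exact absurd hLM.1 hds
    rw [hker] at hcoeff
    exact MvPolynomial.mem_support_iff.mp hLM.1 hcoeff.symm
end
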